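/- arXiv:2204.10604 — 5 statements merged into one kernel-verified Lean document; each statement's English description precedes it below -/
import Mathlib

section
/- For any real number β > 0, the integral ∫₀^∞ (t⁻¹ + t) e^{-βπ(t⁻² + t²)} dt/t equals e^{-2πβ}/√β. -/
open MeasureTheory

lemma img_sub_inv : (fun t : ℝ => t - t⁻¹) '' Set.Ioi 0 = Set.univ := by
  ext u
  simp only [Set.mem_image, Set.mem_Ioi, Set.mem_univ, iff_true]
  set s := Real.sqrt (u ^ 2 + 4) with hs
  have hs2 : s ^ 2 = u ^ 2 + 4 := Real.sq_sqrt (by positivity)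
  have hsu : -u < s := by
    nlinarith [Real.sqrt_nonneg (u ^ 2 + 4), abs_nonneg u, sq_abs u,
      neg_abs_le u, le_abs_self u]
  set t := (u + s) / 2 with htdef
  have ht : (0:ℝ) < t := by rw [htdef]; linarith
  have ht0 : t ≠ 0 := ne_of_gt ht
  refine ⟨t, ht, ?_⟩
  have h2 : t ^ 2 = u * t + 1 := by rw [htdef]; nlinarith
  have h3 : t - t⁻¹ = (t ^ 2 - 1) / t := by field_simp
  rw [h3, h2]
  field_simp
  ring

/-- For any real `β > 0`, the integral
`∫₀^∞ (t⁻¹ + t) e^{-βπ(t⁻² + t²)} dt/t` equals `e^{-2πβ}/√β`. -/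
theorem stmt_0 (β : ℝ) (hβ : 0 < β) :
    ∫ t in Set.Ioi (0 : ℝ),
        (t⁻¹ + t) * Real.exp (-β * Real.pi * (t⁻¹ ^ 2 + t ^ 2)) / t
      = Real.exp (-2 * Real.pi * β) / Real.sqrt β := by
  have key : ∫ x in (fun t : ℝ => t - t⁻¹) '' Set.Ioi 0,
        Real.exp (-(β * Real.pi) * x ^ 2)
      = ∫ t in Set.Ioi (0:ℝ),
        |1 + t⁻¹ ^ 2| • Real.exp (-(β * Real.pi) * (t - t⁻¹) ^ 2) := by
    apply integral_image_eq_integral_abs_deriv_smul measurableSet_Ioi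
    · intro x hx
      have hx0 : x ≠ 0 := ne_of_gt hx
      have h := (hasDerivAt_id x).sub (hasDerivAt_inv hx0)
      have heq : (1 : ℝ) - -(x ^ 2)⁻¹ = 1 + x⁻¹ ^ 2 := by
        rw [inv_pow]; ring
      rw [heq] at h
      exact h.hasDerivWithinAt
    · have hmono : StrictMonoOn (fun t : ℝ => t - t⁻¹) (Set.Ioi 0) := by
        intro a ha b hb hab
        simp only [Set.mem_Ioi] at ha hb
        have : b⁻¹ < a⁻¹ := by gcongr
        simp only
        linarith
      exact hmono.injOn
  rw [img_sub_inv] at key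
  have hgauss : ∫ x : ℝ, Real.exp (-(β * Real.pi) * x ^ 2)
      = Real.sqrt (Real.pi / (β * Real.pi)) := integral_gaussian _
  have hval : Real.sqrt (Real.pi / (β * Real.pi)) = (Real.sqrt β)⁻¹ := by
    rw [show Real.pi / (β * Real.pi) = β⁻¹ by
      field_simp, Real.sqrt_inv]
  calc ∫ t in Set.Ioi (0:ℝ),
        (t⁻¹ + t) * Real.exp (-β * Real.pi * (t⁻¹ ^ 2 + t ^ 2)) / t
      = ∫ t in Set.Ioi (0:ℝ), Real.exp (-2 * Real.pi * β) *
          (|1 + t⁻¹ ^ 2| • Real.exp (-(β * Real.pi) * (t - t⁻¹) ^ 2)) := by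
        apply setIntegral_congr_fun measurableSet_Ioi
        intro t ht
        have ht' : (0:ℝ) < t := ht
        have ht0 : t ≠ 0 := ne_of_gt ht'
        have habs : |1 + t⁻¹ ^ 2| = 1 + t⁻¹ ^ 2 := abs_of_pos (by positivity)
        have hexp : Real.exp (-2 * Real.pi * β) * Real.exp (-(β * Real.pi) * (t - t⁻¹) ^ 2)
            = Real.exp (-β * Real.pi * (t⁻¹ ^ 2 + t ^ 2)) := by
          rw [← Real.exp_add]; congr 1; field_simp; ring
        show _ = Real.exp (-2 * Real.pi * β) * (|1 + t⁻¹ ^ 2| * _)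
        rw [habs, mul_left_comm, hexp]
        field_simp
        ring
    _ = Real.exp (-2 * Real.pi * β) *
          ∫ t in Set.Ioi (0:ℝ), |1 + t⁻¹ ^ 2| • Real.exp (-(β * Real.pi) * (t - t⁻¹) ^ 2) :=
        integral_const_mul _ _
    _ = Real.exp (-2 * Real.pi * β) / Real.sqrt β := by
        rw [← key, setIntegral_univ, hgauss, hval, div_eq_mul_inv]
end

section
/- Let P_r denote the r-th Legendre polynomial and set r₀ = ⌊r/2⌋. Then 2^{-r} ∑_{s=0}^{r} C(r,s)² (x-1)^{r-s}(x+1)^s = (-1)^{r₀} ∑_{s=0}^{r₀} C(r₀ - r - 1/2, r₀ - s) · C(r - r₀ - 1/2, s) · x^{r-2s}, where C(a,k) denotes the generalized binomial coefficient. -/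
set_option maxHeartbeats 1000000

open Finset

noncomputable def genBinom (a : ℝ) (k : ℕ) : ℝ :=
  (∏ i ∈ Finset.range k, (a - i)) / (Nat.factorial k)

lemma prodAsc (c : ℕ) : ∀ s : ℕ,
    ∏ i ∈ Finset.range s, ((c : ℝ) + 1/2 + i)
      = (Nat.factorial (2*c+2*s)) * (Nat.factorial c) /
        ((Nat.factorial (2*c)) * (Nat.factorial (c+s)) * 4^s) := by
  intro s
  induction s with
  | zero =>
      simp only [Finset.range_zero, Finset.prod_empty, Nat.mul_zero, Nat.add_zero, pow_zero, mul_one]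
      rw [div_self (by positivity)]
  | succ s ih =>
      rw [Finset.prod_range_succ, ih]
      have e1 : 2*c+2*(s+1) = (2*c+2*s+1)+1 := by ring
      have e2 : c+(s+1) = (c+s)+1 := by ring
      rw [e1, e2, Nat.factorial_succ, Nat.factorial_succ, Nat.factorial_succ]
      have h1 : (Nat.factorial (2*c) : ℝ) ≠ 0 := Nat.cast_ne_zero.mpr (Nat.factorial_ne_zero _)
      have h2 : (Nat.factorial (c+s) : ℝ) ≠ 0 := Nat.cast_ne_zero.mpr (Nat.factorial_ne_zero _)
      have h3 : (4:ℝ)^s ≠ 0 := by positivity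
      push_cast
      field_simp
      ring

/-- Descending product reduces to ascending. -/
lemma prodDesc (m s : ℕ) (h : s ≤ m) :
    ∏ i ∈ Finset.range s, ((m : ℝ) - 1/2 - i)
      = ∏ i ∈ Finset.range s, (((m - s : ℕ) : ℝ) + 1/2 + i) := by
  rw [← Finset.prod_range_reflect (fun j => ((m : ℝ) - 1/2 - j)) s]
  refine Finset.prod_congr rfl fun i hi => ?_
  rw [Finset.mem_range] at hi
  have h1 : ((s - 1 - i : ℕ) : ℝ) = (s : ℝ) - 1 - i := by
    have : (s - 1 - i : ℕ) = s - (1 + i) := by omega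
    rw [this, Nat.cast_sub (by omega)]
    push_cast; ring
  have h2 : ((m - s : ℕ) : ℝ) = (m : ℝ) - s := by
    rw [Nat.cast_sub h]
  rw [h2, h1]
  ring

lemma genBinom_neg_half (m k : ℕ) :
    genBinom (-(m : ℝ) - 1/2) k
      = (-1:ℝ)^k * ((Nat.factorial (2*m+2*k)) * (Nat.factorial m) /
          ((Nat.factorial (2*m)) * (Nat.factorial (m+k)) * 4^k * (Nat.factorial k))) := by
  unfold genBinom
  have h : ∏ i ∈ Finset.range k, (-(m : ℝ) - 1/2 - i)
      = (-1:ℝ)^k * ∏ i ∈ Finset.range k, ((m : ℝ) + 1/2 + i) := by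
    calc ∏ i ∈ Finset.range k, (-(m : ℝ) - 1/2 - i)
        = ∏ i ∈ Finset.range k, ((-1:ℝ) * ((m : ℝ) + 1/2 + i)) :=
          Finset.prod_congr rfl fun i _ => by ring
      _ = (∏ _i ∈ Finset.range k, (-1:ℝ)) * ∏ i ∈ Finset.range k, ((m : ℝ) + 1/2 + i) :=
          Finset.prod_mul_distrib
      _ = (-1:ℝ)^k * ∏ i ∈ Finset.range k, ((m : ℝ) + 1/2 + i) := by
          rw [Finset.prod_const, Finset.card_range]
  rw [h, prodAsc]
  ring

lemma genBinom_pos_half (m s : ℕ) (h : s ≤ m) :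
    genBinom ((m : ℝ) - 1/2) s
      = (Nat.factorial (2*m)) * (Nat.factorial (m-s)) /
          ((Nat.factorial (2*(m-s))) * (Nat.factorial m) * 4^s * (Nat.factorial s)) := by
  unfold genBinom
  have h1 : ∏ i ∈ Finset.range s, ((m : ℝ) - 1/2 - i)
      = ∏ i ∈ Finset.range s, (((m - s : ℕ) : ℝ) + 1/2 + i) := prodDesc m s h
  rw [h1, prodAsc]
  have e1 : 2*(m-s)+2*s = 2*m := by omega
  have e2 : (m-s)+s = m := by omega
  rw [e1, e2]
  ring

lemma neg_one_pow_congr_real (a b : ℕ) (h : a % 2 = b % 2) : (-1:ℝ)^a = (-1:ℝ)^b := by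
  conv_lhs => rw [← Nat.div_add_mod a 2]
  conv_rhs => rw [← Nat.div_add_mod b 2]
  rw [pow_add, pow_add, pow_mul, pow_mul, h]
  norm_num

lemma combine {A B : ℝ} (a b c : ℕ) (h : (b + c) % 2 = a % 2) :
    (-1:ℝ)^b * (((-1:ℝ)^c * A) * B) = (-1:ℝ)^a * (A * B) := by
  calc (-1:ℝ)^b * (((-1)^c * A) * B) = ((-1)^b * (-1)^c) * (A*B) := by ring
    _ = (-1:ℝ)^(b+c) * (A*B) := by rw [← pow_add]
    _ = (-1:ℝ)^a * (A*B) := by rw [neg_one_pow_congr_real (b+c) a h]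

lemma coeff_eq (r s : ℕ) (hs : s ≤ r/2) :
    (-1:ℝ)^(r/2) * (genBinom (((r/2 : ℕ) : ℝ) - r - 1/2) (r/2 - s) *
      genBinom ((r : ℝ) - ((r/2 : ℕ) : ℝ) - 1/2) s)
    = (-1:ℝ)^s * (r.choose s) * ((2*r-2*s).choose r) / 2^r := by
  have hfacne : ∀ n : ℕ, (Nat.factorial n : ℝ) ≠ 0 :=
    fun n => Nat.cast_ne_zero.mpr (Nat.factorial_ne_zero n)
  obtain ⟨t, ht⟩ | ⟨t, ht⟩ := Nat.even_or_odd r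
  · subst ht
    have h2 : (t+t)/2 = t := by omega
    rw [h2] at hs ⊢
    have hb1 : ((t : ℕ) : ℝ) - ((t+t : ℕ) : ℝ) - 1/2 = -(t:ℝ) - 1/2 := by push_cast; ring
    have hb2 : ((t+t : ℕ) : ℝ) - ((t : ℕ) : ℝ) - 1/2 = ((t:ℕ):ℝ) - 1/2 := by push_cast; ring
    rw [hb1, hb2, genBinom_neg_half t (t-s), genBinom_pos_half t s hs]
    have e1 : 2*t+2*(t-s) = 2*(t+t)-2*s := by omega
    have e2 : t+(t-s) = t+t-s := by omega
    rw [e1, e2]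
    have a1n : (t+t).choose s * (Nat.factorial s * Nat.factorial (t+t-s)) = Nat.factorial (t+t) := by
      rw [← mul_assoc]; exact Nat.choose_mul_factorial_mul_factorial (by omega)
    have a1 : (((t+t).choose s : ℕ) : ℝ)
        = (Nat.factorial (t+t)) / (Nat.factorial s * Nat.factorial (t+t-s)) := by
      rw [eq_div_iff (by positivity)]; exact_mod_cast a1n
    have a2n : (2*(t+t)-2*s).choose (t+t) *
        (Nat.factorial (t+t) * Nat.factorial (2*(t-s))) = Nat.factorial (2*(t+t)-2*s) := by
      have e3 : 2*(t-s) = 2*(t+t)-2*s - (t+t) := by omega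
      rw [e3, ← mul_assoc]; exact Nat.choose_mul_factorial_mul_factorial (by omega)
    have a2 : (((2*(t+t)-2*s).choose (t+t) : ℕ) : ℝ)
        = (Nat.factorial (2*(t+t)-2*s)) / (Nat.factorial (t+t) * Nat.factorial (2*(t-s))) := by
      rw [eq_div_iff (by positivity)]; exact_mod_cast a2n
    rw [a1, a2, combine s t (t-s) (by omega)]
    have h4 : (2:ℝ)^(t+t) = 4^(t-s) * 4^s := by
      rw [← pow_add, show (4:ℝ) = 2^2 by norm_num, ← pow_mul]
      congr 1; omega
    rw [h4]
    field_simp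
  · subst ht
    have h2 : (2*t+1)/2 = t := by omega
    rw [h2] at hs ⊢
    have hb1 : ((t : ℕ) : ℝ) - ((2*t+1 : ℕ) : ℝ) - 1/2 = -((t+1 : ℕ):ℝ) - 1/2 := by
      push_cast; ring
    have hb2 : ((2*t+1 : ℕ) : ℝ) - ((t : ℕ) : ℝ) - 1/2 = ((t+1:ℕ):ℝ) - 1/2 := by
      push_cast; ring
    rw [hb1, hb2, genBinom_neg_half (t+1) (t-s), genBinom_pos_half (t+1) s (by omega)]
    have e1 : 2*(t+1)+2*(t-s) = 2*(2*t+1)-2*s := by omega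
    have e2 : (t+1)+(t-s) = 2*t+1-s := by omega
    have e3 : (t+1)-s = (t-s)+1 := by omega
    have e4 : 2*((t+1)-s) = (2*(t-s)+1)+1 := by omega
    rw [e1, e2, e4, e3]
    have a1n : (2*t+1).choose s * (Nat.factorial s * Nat.factorial (2*t+1-s))
        = Nat.factorial (2*t+1) := by
      rw [← mul_assoc]; exact Nat.choose_mul_factorial_mul_factorial (by omega)
    have a1 : (((2*t+1).choose s : ℕ) : ℝ)
        = (Nat.factorial (2*t+1)) / (Nat.factorial s * Nat.factorial (2*t+1-s)) := by
      rw [eq_div_iff (by positivity)]; exact_mod_cast a1n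
    have a2n : (2*(2*t+1)-2*s).choose (2*t+1) *
        (Nat.factorial (2*t+1) * Nat.factorial (2*(t-s)+1))
        = Nat.factorial (2*(2*t+1)-2*s) := by
      have e5 : 2*(t-s)+1 = 2*(2*t+1)-2*s - (2*t+1) := by omega
      rw [e5, ← mul_assoc]; exact Nat.choose_mul_factorial_mul_factorial (by omega)
    have a2 : (((2*(2*t+1)-2*s).choose (2*t+1) : ℕ) : ℝ)
        = (Nat.factorial (2*(2*t+1)-2*s)) /
            (Nat.factorial (2*t+1) * Nat.factorial (2*(t-s)+1)) := by
      rw [eq_div_iff (by positivity)]; exact_mod_cast a2n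
    rw [a1, a2, combine s t (t-s) (by omega)]
    have h4 : (2:ℝ)^(2*t+1) = 2 * (4^(t-s) * 4^s) := by
      rw [← pow_add, show t-s+s = t by omega, show (4:ℝ) = 2^2 by norm_num, ← pow_mul,
        pow_succ]
      ring
    rw [h4]
    have f1 : ((Nat.factorial ((t-s)+1)) : ℝ)
        = (((t-s : ℕ) : ℝ) + 1) * ((Nat.factorial (t-s)) : ℝ) := by
      rw [Nat.factorial_succ]; push_cast; ring
    have f2 : ((Nat.factorial ((2*(t-s)+1)+1)) : ℝ)
        = (2 * ((t-s : ℕ) : ℝ) + 2) * ((Nat.factorial (2*(t-s)+1)) : ℝ) := by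
      rw [Nat.factorial_succ]; push_cast; ring
    rw [f2, f1]
    have hst : (s : ℝ) ≤ (t : ℝ) := by exact_mod_cast hs
    have h6 : (2 : ℝ) * ((t-s : ℕ) : ℝ) + 2 ≠ 0 := by positivity
    have h7 : ((t-s : ℕ) : ℝ) + 1 ≠ 0 := by positivity
    have h6' : (2 : ℝ) * ((t : ℝ) - (s : ℝ)) + 2 ≠ 0 := by nlinarith
    have h7' : (t : ℝ) - (s : ℝ) + 1 ≠ 0 := by nlinarith
    field_simp [h6, h7, h6', h7']


open Polynomial in
lemma derivA (r : ℕ) :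
    derivative^[r] (((X - C 1) * (X + C 1) : ℝ[X]) ^ r)
      = (r.factorial : ℝ[X]) *
          ∑ k ∈ Finset.range (r+1),
            ((r.choose k : ℝ[X]))^2 * ((X - C 1)^k * (X + C 1)^(r-k)) := by
  rw [mul_pow, Polynomial.iterate_derivative_mul, Finset.mul_sum]
  refine Finset.sum_congr rfl fun k hk => ?_
  rw [Finset.mem_range] at hk
  have hk' : k ≤ r := by omega
  rw [Polynomial.iterate_derivative_X_sub_pow, Polynomial.iterate_derivative_X_add_pow]
  have e : r - (r - k) = k := by omega
  rw [e]
  have hn : r.choose k * (r.descFactorial (r-k)) * (r.descFactorial k)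
      = r.factorial * (r.choose k)^2 := by
    rw [Nat.descFactorial_eq_factorial_mul_choose, Nat.descFactorial_eq_factorial_mul_choose,
      Nat.choose_symm hk']
    have h := Nat.choose_mul_factorial_mul_factorial hk'
    rw [← h]; ring
  have : (r.choose k) •
        ((r.descFactorial (r-k)) • ((X - C 1 : ℝ[X]))^k * ((r.descFactorial k) • (X + C 1 : ℝ[X])^(r-k)))
      = ((r.choose k * r.descFactorial (r-k) * r.descFactorial k : ℕ) : ℝ[X]) *
          (((X - C 1 : ℝ[X]))^k * ((X + C 1 : ℝ[X]))^(r-k)) := by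
    simp only [nsmul_eq_mul, Nat.cast_mul]
    ring
  rw [this, hn]
  push_cast
  ring

lemma neg_one_pow_congr' {R : Type*} [Monoid R] [HasDistribNeg R] (a b : ℕ)
    (h : a % 2 = b % 2) : (-1:R)^a = (-1:R)^b := by
  conv_lhs => rw [← Nat.div_add_mod a 2]
  conv_rhs => rw [← Nat.div_add_mod b 2]
  rw [pow_add, pow_add, pow_mul, pow_mul, neg_one_sq, one_pow, one_pow, h]

open Polynomial in
lemma derivB (r : ℕ) :
    derivative^[r] (((X : ℝ[X])^2 - C 1) ^ r)
      = (r.factorial : ℝ[X]) *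
          ∑ s ∈ Finset.range (r/2+1),
            ((-1:ℝ[X])^s * ((r.choose s : ℕ) : ℝ[X]) * (((2*r-2*s).choose r : ℕ) : ℝ[X])) * X^(r-2*s) := by
  have hexp : ((X : ℝ[X])^2 - C 1)^r
      = ∑ i ∈ Finset.range (r+1), ((-1:ℝ[X])^(i+r) * ((r.choose i : ℕ) : ℝ[X])) * X^(2*i) := by
    rw [sub_pow]
    refine Finset.sum_congr rfl fun i _ => ?_
    rw [← pow_mul]
    simp only [C_1, one_pow]
    ring
  rw [hexp, Polynomial.iterate_derivative_sum]
  have step : ∀ i ∈ Finset.range (r+1),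
      derivative^[r] (((-1:ℝ[X])^(i+r) * ((r.choose i : ℕ) : ℝ[X])) * X^(2*i))
        = ((-1:ℝ[X])^(i+r) * ((r.choose i : ℕ) : ℝ[X])) *
            (((Nat.descFactorial (2*i) r : ℕ) : ℝ[X]) * X^(2*i-r)) := by
    intro i _
    have hc : ((-1:ℝ[X])^(i+r) * ((r.choose i : ℕ) : ℝ[X])) = C ((-1:ℝ)^(i+r) * (r.choose i)) := by
      simp [map_mul, map_pow]
    rw [hc, Polynomial.iterate_derivative_C_mul, Polynomial.iterate_derivative_X_pow_eq_natCast_mul]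
  rw [Finset.sum_congr rfl step]
  rw [← Finset.sum_range_reflect]
  rw [Finset.mul_sum]
  rw [← Finset.sum_subset (Finset.range_subset_range.mpr (show r/2+1 ≤ r+1 by omega))
    (fun j hj hj' => ?_)]
  · refine Finset.sum_congr rfl fun j hj => ?_
    rw [Finset.mem_range] at hj
    have hj' : j ≤ r/2 := by omega
    have e0 : r + 1 - 1 - j = r - j := by omega
    rw [e0]
    have e1 : 2*(r-j) - r = r - 2*j := by omega
    have e2 : Nat.descFactorial (2*(r-j)) r = r.factorial * ((2*r-2*j).choose r) := by
      rw [show 2*(r-j) = 2*r-2*j by omega, Nat.descFactorial_eq_factorial_mul_choose]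
    have e3 : r.choose (r-j) = r.choose j := Nat.choose_symm (by omega)
    have e4 : (-1:ℝ[X])^((r-j)+r) = (-1:ℝ[X])^j := neg_one_pow_congr' _ _ (by omega)
    rw [e1, e2, e3, e4]
    push_cast
    ring
  · rw [Finset.mem_range] at hj hj'
    have e0 : r + 1 - 1 - j = r - j := by omega
    rw [e0]
    have hz : Nat.descFactorial (2*(r-j)) r = 0 :=
      Nat.descFactorial_eq_zero_iff_lt.mpr (by omega)
    rw [hz]
    simp

open Polynomial in
lemma legendre_sum (r : ℕ) (x : ℝ) :
    ∑ s ∈ Finset.range (r+1), (r.choose s : ℝ)^2 * (x - 1)^(r-s) * (x + 1)^s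
      = ∑ s ∈ Finset.range (r/2+1),
          (-1:ℝ)^s * (r.choose s) * ((2*r-2*s).choose r) * x^(r-2*s) := by
  have hpoly : (((X - C 1) * (X + C 1)) : ℝ[X]) ^ r = (((X:ℝ[X])^2 - C 1)) ^ r := by
    rw [C_1]
    ring
  have h := derivA r
  rw [hpoly, derivB r] at h
  have hfac : ((r.factorial : ℕ) : ℝ[X]) ≠ 0 :=
    (Nat.cast_ne_zero (R := ℝ[X])).mpr r.factorial_ne_zero
  have h2 := mul_left_cancel₀ hfac h
  have h3 := congrArg (Polynomial.eval x) h2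
  simp only [Polynomial.eval_finset_sum, Polynomial.eval_mul, Polynomial.eval_pow,
    Polynomial.eval_sub, Polynomial.eval_add, Polynomial.eval_X, Polynomial.eval_one,
    Polynomial.eval_natCast, Polynomial.eval_neg, Polynomial.eval_C] at h3
  calc ∑ s ∈ Finset.range (r+1), (r.choose s : ℝ)^2 * (x - 1)^(r-s) * (x + 1)^s
      = ∑ j ∈ Finset.range (r+1),
          (fun k => (r.choose k : ℝ)^2 * ((x - 1)^k * (x + 1)^(r-k))) (r+1-1-j) := by
        refine Finset.sum_congr rfl fun j hj => ?_
        rw [Finset.mem_range] at hj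
        simp only
        rw [show r+1-1-j = r-j by omega, Nat.choose_symm (show j ≤ r by omega),
          show r-(r-j) = j by omega]
        ring
    _ = ∑ k ∈ Finset.range (r+1), (r.choose k : ℝ)^2 * ((x - 1)^k * (x + 1)^(r-k)) :=
        Finset.sum_range_reflect (fun k => (r.choose k : ℝ)^2 * ((x - 1)^k * (x + 1)^(r-k))) (r+1)
    _ = _ := h3.symm

/-- The two expressions for the `r`-th Legendre polynomial:
`2^{-r} ∑_{s=0}^{r} C(r,s)² (x-1)^{r-s}(x+1)^s
  = (-1)^{r₀} ∑_{s=0}^{r₀} C(r₀-r-1/2, r₀-s) C(r-r₀-1/2, s) x^{r-2s}`, `r₀ = ⌊r/2⌋`. -/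
theorem stmt_2 (r : ℕ) (x : ℝ) :
    ((2 : ℝ) ^ r)⁻¹ *
        ∑ s ∈ Finset.range (r + 1), (r.choose s : ℝ) ^ 2 * (x - 1) ^ (r - s) * (x + 1) ^ s
      = (-1 : ℝ) ^ (r / 2) *
        ∑ s ∈ Finset.range (r / 2 + 1),
          genBinom (((r / 2 : ℕ) : ℝ) - r - 1 / 2) (r / 2 - s) *
            genBinom ((r : ℝ) - ((r / 2 : ℕ) : ℝ) - 1 / 2) s * x ^ (r - 2 * s) := by
  rw [legendre_sum r x, inv_mul_eq_iff_eq_mul₀ (by positivity), Finset.mul_sum,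
    Finset.mul_sum]
  refine Finset.sum_congr rfl fun s hs => ?_
  rw [Finset.mem_range] at hs
  have h := coeff_eq r s (by omega)
  have h' : (2:ℝ)^r * ((-1:ℝ)^(r/2) * (genBinom (((r/2 : ℕ) : ℝ) - r - 1/2) (r/2 - s) *
      genBinom ((r : ℝ) - ((r/2 : ℕ) : ℝ) - 1/2) s))
      = (-1:ℝ)^s * (r.choose s) * (((2*r-2*s).choose r : ℕ) : ℝ) := by
    rw [h]
    field_simp
  linear_combination (x^(r-2*s)) * h'.symm
end

section
/- Let ϱ be an odd continuous character of H₁(𝔸)/H₁(ℚ) (where H₁(ℚ) ≅ F¹ for a real quadratic field F), with ϱ(h) = sgn(h_∞)ϱ_f(h_f). If ε_ϱ > 1 generates the cyclic group Γ_ϱ = H₁(ℚ)⁺ ∩ K_ϱ of totally positive units fixed by ϱ, then for m > 0 and β ∈ F^× with sign(β) = sign(β'), the limit as v → ∞ of e^{2πmv} · 2 log(ε_ϱ) ∫₀^∞ φ⁺_∞(t⁻¹·(β√v, β'√v)) {log t / log ε_ϱ} dt/t, with φ⁺_∞(x₁,x₂) = (x₁+x₂)e^{-π(x₁²+x₂²)}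 and {a} the modified fractional part with {0}=1/2, equals sgn(β)·2 log(ε_ϱ)·{log√|β/β'| / log ε_ϱ}. -/
open MeasureTheory

/-- The modified fractional part: `{a} = a - lim_{ε→0}(⌊a+ε⌋+⌊a-ε⌋)/2`, i.e. the usual
fractional part for `a ∉ ℤ` and `1/2` for `a ∈ ℤ`. -/
noncomputable def mfrac (a : ℝ) : ℝ :=
  open Classical in
  if ∃ n : ℤ, a = n then 1 / 2 else Int.fract a

open Real Filter Set

lemma measurable_mfrac : Measurable mfrac := by
  unfold mfrac
  refine Measurable.ite ?_ measurable_const measurable_fract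
  have : {a : ℝ | ∃ n : ℤ, a = n} = Set.range (Int.cast : ℤ → ℝ) := by
    ext a; simp [eq_comm, Set.range]
  rw [this]
  exact (Set.countable_range _).measurableSet

lemma mfrac_nonneg (a : ℝ) : 0 ≤ mfrac a := by
  unfold mfrac; split
  · norm_num
  · exact Int.fract_nonneg a

lemma mfrac_le_one (a : ℝ) : mfrac a ≤ 1 := by
  unfold mfrac; split
  · norm_num
  · exact (Int.fract_lt_one a).le

lemma abs_mfrac_le_one (a : ℝ) : |mfrac a| ≤ 1 :=
  abs_le.2 ⟨by linarith [mfrac_nonneg a], mfrac_le_one a⟩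

lemma mfrac_eq_of_mem_Ioo {n : ℤ} {x : ℝ} (hx : x ∈ Set.Ioo (n : ℝ) (n + 1)) :
    mfrac x = x - n := by
  have hne : ¬ ∃ k : ℤ, x = k := by
    rintro ⟨k, rfl⟩
    have h1 : n < k := by exact_mod_cast hx.1
    have h2 : k < n + 1 := by exact_mod_cast hx.2
    omega
  have hfl : ⌊x⌋ = n := by
    rw [Int.floor_eq_iff]
    exact ⟨hx.1.le, hx.2⟩
  unfold mfrac
  rw [if_neg hne, Int.fract, hfl]

lemma integrable_gauss' {v c : ℝ} (hc : 0 < c) (a : ℝ) :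
    Integrable (fun u : ℝ => Real.sqrt v * (Real.exp a * Real.exp (-c * u^2))) := by
  exact ((integrable_exp_neg_mul_sq hc).const_mul _).const_mul _

lemma tendsto_sqrt_mul_exp {c : ℝ} (hc : 0 < c) :
    Tendsto (fun v : ℝ => Real.sqrt v * Real.exp (-c * v)) atTop (nhds 0) := by
  have h := tendsto_rpow_mul_exp_neg_mul_atTop_nhds_zero (1/2) c hc
  refine h.congr' ?_
  filter_upwards [eventually_ge_atTop (0:ℝ)] with v hv
  rw [Real.sqrt_eq_rpow]


lemma gauss_Ioi {v : ℝ} (hv : 0 < v) :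
    ∫ u in Set.Ioi (0:ℝ), Real.sqrt v * Real.exp (-Real.pi * v * u^2) = 1/2 := by
  have h : ∀ u : ℝ, -Real.pi * v * u^2 = -(Real.pi * v) * u^2 := fun u => by ring
  simp_rw [h, MeasureTheory.integral_const_mul, integral_gaussian_Ioi (Real.pi * v)]
  have hπ : (0:ℝ) < Real.pi := Real.pi_pos
  rw [show Real.pi / (Real.pi * v) = 1 / v by field_simp]
  rw [one_div, Real.sqrt_inv]
  have : Real.sqrt v ≠ 0 := (Real.sqrt_pos.2 hv).ne'
  field_simp

lemma gauss_Iio {v : ℝ} (hv : 0 < v) :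
    ∫ u in Set.Iio (0:ℝ), Real.sqrt v * Real.exp (-Real.pi * v * u^2) = 1/2 := by
  have h := integral_comp_neg_Ioi (0:ℝ) (fun u => Real.sqrt v * Real.exp (-Real.pi * v * u^2))
  simp only [neg_zero, neg_sq] at h
  rw [← integral_Iic_eq_integral_Iio, ← h, gauss_Ioi hv]

lemma integrable_gauss {v : ℝ} (hv : 0 < v) :
    Integrable (fun u : ℝ => Real.sqrt v * Real.exp (-Real.pi * v * u^2)) := by
  have h : ∀ u : ℝ, -Real.pi * v * u^2 = -(Real.pi * v) * u^2 := fun u => by ring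
  simp_rw [h]
  exact (integrable_exp_neg_mul_sq (by positivity)).const_mul _


lemma integrable_gaussF {v : ℝ} (hv : 0 < v) {g : ℝ → ℝ} (hg : Measurable g)
    (hb : ∀ x, |g x| ≤ 1) :
    Integrable (fun u : ℝ => Real.sqrt v * Real.exp (-Real.pi * v * u^2) * g u) := by
  have hG : Integrable (fun u : ℝ => Real.sqrt v * Real.exp (-(Real.pi * v) * u^2)) :=
    (integrable_exp_neg_mul_sq (by positivity)).const_mul _
  refine hG.mono' ?_ (ae_of_all _ fun u => ?_)
  · apply Measurable.aestronglyMeasurable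
    fun_prop
  · rw [Real.norm_eq_abs, abs_mul, abs_mul]
    have h1 : |Real.sqrt v| = Real.sqrt v := abs_of_nonneg (Real.sqrt_nonneg v)
    have h2 : |Real.exp (-Real.pi * v * u^2)| = Real.exp (-(Real.pi*v) * u^2) := by
      rw [abs_of_nonneg (Real.exp_pos _).le]; ring_nf
    rw [h1, h2]
    have := hb u
    have e1 : (0:ℝ) ≤ Real.sqrt v * Real.exp (-(Real.pi*v) * u^2) := by positivity
    nlinarith [Real.sqrt_nonneg v, Real.exp_pos (-(Real.pi*v) * u^2)]

lemma tail_small {S : Set ℝ} (hS : MeasurableSet S) (hSsub : ∀ u ∈ S, 1 ≤ |u|) {g : ℝ → ℝ}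
    (hg : Measurable g) (hb : ∀ x, |g x| ≤ 1) :
    Tendsto (fun v : ℝ => ∫ u in S, Real.sqrt v * Real.exp (-Real.pi * v * u^2) * g u)
      atTop (nhds 0) := by
  have hB : Tendsto (fun v : ℝ => Real.sqrt (Real.pi/(Real.pi/2)) *
      (Real.sqrt v * Real.exp (-(Real.pi/2) * v))) atTop (nhds 0) := by
    simpa using (tendsto_sqrt_mul_exp (c := Real.pi/2) (by positivity)).const_mul
      (Real.sqrt (Real.pi/(Real.pi/2)))
  refine squeeze_zero_norm' ?_ hB
  filter_upwards [eventually_ge_atTop (1:ℝ)] with v hv1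
  have hv : (0:ℝ) < v := lt_of_lt_of_le one_pos hv1
  have hF := integrable_gaussF hv hg hb
  have hbound : Integrable (fun u : ℝ =>
      Real.sqrt v * (Real.exp (-(Real.pi/2) * v) * Real.exp (-(Real.pi/2) * u^2))) :=
    integrable_gauss' (by positivity) _
  calc ‖∫ u in S, Real.sqrt v * Real.exp (-Real.pi * v * u^2) * g u‖
      ≤ ∫ u in S, ‖Real.sqrt v * Real.exp (-Real.pi * v * u^2) * g u‖ :=
        norm_integral_le_integral_norm _
    _ ≤ ∫ u in S, Real.sqrt v * (Real.exp (-(Real.pi/2) * v) * Real.exp (-(Real.pi/2) * u^2)) := by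
        apply setIntegral_mono_on (hF.norm.integrableOn) (hbound.integrableOn) hS
        intro u hu
        have hu1 : 1 ≤ u^2 := by
          have := hSsub u hu
          nlinarith [sq_abs u]
        rw [Real.norm_eq_abs, abs_mul, abs_mul,
          abs_of_nonneg (Real.sqrt_nonneg v), abs_of_nonneg (Real.exp_pos _).le,
          ← Real.exp_add]
        have hexp : Real.exp (-Real.pi * v * u^2) ≤
            Real.exp (-(Real.pi/2) * v + -(Real.pi/2) * u^2) := by
          apply Real.exp_le_exp.2
          nlinarith [Real.pi_pos, mul_nonneg (sub_nonneg.2 hv1) (sub_nonneg.2 hu1)]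
        calc Real.sqrt v * Real.exp (-Real.pi * v * u^2) * |g u|
            ≤ Real.sqrt v * Real.exp (-Real.pi * v * u^2) := by
              nlinarith [mul_nonneg (Real.sqrt_nonneg v) (Real.exp_pos (-Real.pi * v * u^2)).le,
                sub_nonneg.2 (hb u),
                mul_nonneg (mul_nonneg (Real.sqrt_nonneg v)
                  (Real.exp_pos (-Real.pi * v * u^2)).le) (sub_nonneg.2 (hb u))]
          _ ≤ Real.sqrt v * Real.exp (-(Real.pi/2) * v + -(Real.pi/2) * u^2) :=
              mul_le_mul_of_nonneg_left hexp (Real.sqrt_nonneg v)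
    _ ≤ ∫ u : ℝ, Real.sqrt v * (Real.exp (-(Real.pi/2) * v) * Real.exp (-(Real.pi/2) * u^2)) :=
        setIntegral_le_integral hbound (ae_of_all _ fun u => by positivity)
    _ = Real.sqrt v * (Real.exp (-(Real.pi/2) * v) * Real.sqrt (Real.pi/(Real.pi/2))) := by
        rw [MeasureTheory.integral_const_mul, MeasureTheory.integral_const_mul,
          integral_gaussian (Real.pi/2)]
    _ = Real.sqrt (Real.pi/(Real.pi/2)) * (Real.sqrt v * Real.exp (-(Real.pi/2) * v)) := by ring


lemma peak_main {s : Set ℝ} (hs : MeasurableSet s) (hsub : s ⊆ Metric.ball (0:ℝ) 2) {g : ℝ → ℝ}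
    (hg : Measurable g) (hb : ∀ x, |g x| ≤ 1) {a : ℝ}
    (hiφ : Tendsto (fun v : ℝ => ∫ u in s, 2 * (Real.sqrt v * Real.exp (-Real.pi * v * u^2)))
      atTop (nhds 1))
    (hcg : Tendsto g (nhdsWithin 0 s) (nhds a)) :
    Tendsto (fun v : ℝ => ∫ u in s, Real.sqrt v * Real.exp (-Real.pi * v * u^2) * g u)
      atTop (nhds (a/2)) := by
  have hμs : volume s ≠ ⊤ :=
    ((measure_mono hsub).trans_lt measure_ball_lt_top).ne
  have key := tendsto_setIntegral_peak_smul_of_integrableOn_of_tendsto (μ := volume)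
    (l := atTop) (x₀ := (0:ℝ))
    (φ := fun v u => 2 * (Real.sqrt v * Real.exp (-Real.pi * v * u^2)))
    hs hs subset_rfl self_mem_nhdsWithin hμs
    (Eventually.of_forall fun v => fun x _ => by positivity)
    (fun u hu hu0 => by
      rw [Metric.tendstoUniformlyOn_iff]
      intro ε hε
      obtain ⟨δ, hδ, hball⟩ := Metric.isOpen_iff.1 hu 0 hu0
      have T := tendsto_sqrt_mul_exp (c := Real.pi * δ^2) (by positivity)
      have T2 : Tendsto (fun v : ℝ => 2 * (Real.sqrt v * Real.exp (-(Real.pi * δ^2) * v)))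
          atTop (nhds 0) := by simpa using T.const_mul 2
      filter_upwards [(T2.eventually (eventually_lt_nhds hε)), eventually_ge_atTop (0:ℝ)]
        with v hv hv0 x hx
      have hxδ : δ ≤ |x| := by
        by_contra hlt
        push_neg at hlt
        exact hx.2 (hball (by simpa [Real.dist_eq] using hlt))
      have hδx : δ^2 ≤ x^2 := by
        have := sq_abs x ▸ pow_le_pow_left₀ hδ.le hxδ 2
        simpa [sq_abs] using this
      have hexp : Real.exp (-Real.pi * v * x^2) ≤ Real.exp (-(Real.pi * δ^2) * v) := by
        apply Real.exp_le_exp.2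
        nlinarith [Real.pi_pos, mul_nonneg hv0 (sub_nonneg.2 hδx)]
      have hpos : (0:ℝ) ≤ 2 * (Real.sqrt v * Real.exp (-Real.pi * v * x^2)) := by positivity
      rw [Pi.zero_apply, dist_comm, Real.dist_eq, sub_zero, abs_of_nonneg hpos]
      calc 2 * (Real.sqrt v * Real.exp (-Real.pi * v * x^2))
          ≤ 2 * (Real.sqrt v * Real.exp (-(Real.pi * δ^2) * v)) := by
            have := Real.sqrt_nonneg v; nlinarith
        _ < ε := hv)
    hiφ
    (Eventually.of_forall fun v => (Continuous.aestronglyMeasurable (by continuity)))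
    (Measure.integrableOn_of_bounded hμs hg.aestronglyMeasurable
      (ae_of_all _ fun x => by rw [Real.norm_eq_abs]; exact hb x))
    hcg
  have : (fun v : ℝ => ∫ u in s, Real.sqrt v * Real.exp (-Real.pi * v * u^2) * g u)
      = fun v => (1/2) * ∫ u in s, (fun u => 2 * (Real.sqrt v * Real.exp (-Real.pi * v * u^2))) u • g u := by
    funext v
    rw [← MeasureTheory.integral_const_mul]
    congr 1; funext u; simp only [smul_eq_mul]; ring
  rw [this]
  have := key.const_mul (1/2)
  simpa [mul_comm, div_eq_mul_inv] using this


lemma hiphi_neg : Tendsto (fun v : ℝ =>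
    ∫ u in Set.Ioo (-1:ℝ) 0, 2 * (Real.sqrt v * Real.exp (-Real.pi * v * u^2)))
    atTop (nhds 1) := by
  have htail := (tail_small measurableSet_Iic (fun u hu => by
      rw [abs_of_nonpos (le_trans hu (by norm_num))]
      linarith [mem_Iic.1 hu]) measurable_const (fun x => by norm_num) :
    Tendsto (fun v : ℝ => ∫ u in Set.Iic (-1:ℝ),
      Real.sqrt v * Real.exp (-Real.pi * v * u^2) * (1:ℝ)) atTop (nhds 0))
  have key : Tendsto (fun v : ℝ => 2 * ((1:ℝ)/2 - ∫ u in Set.Iic (-1:ℝ),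
      Real.sqrt v * Real.exp (-Real.pi * v * u^2) * (1:ℝ))) atTop (nhds 1) := by
    have := (tendsto_const_nhds (x := (1:ℝ)/2) (f := atTop)).sub htail
    have h2 := this.const_mul (2:ℝ)
    simpa using h2
  refine key.congr' ?_
  filter_upwards [eventually_gt_atTop (0:ℝ)] with v hv
  have hun : Set.Iic (-1:ℝ) ∪ Set.Ioo (-1:ℝ) 0 = Set.Iio 0 :=
    Set.Iic_union_Ioo_eq_Iio (by norm_num)
  have hF := integrable_gaussF hv (g := fun _ => (1:ℝ)) measurable_const (fun x => by norm_num)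
  have hdisj : Disjoint (Set.Iic (-1:ℝ)) (Set.Ioo (-1:ℝ) 0) := by
    apply Set.disjoint_left.2; intro x hx hx2; exact absurd hx2.1 (not_lt.2 hx)
  have hsplit := setIntegral_union (f := fun u : ℝ =>
      Real.sqrt v * Real.exp (-Real.pi * v * u^2) * (1:ℝ))
    (μ := volume) hdisj measurableSet_Ioo hF.integrableOn hF.integrableOn
  rw [hun] at hsplit
  simp only [mul_one] at hsplit htail ⊢
  have : ∫ u in Set.Ioo (-1:ℝ) 0, Real.sqrt v * Real.exp (-Real.pi * v * u^2)
      = 1/2 - ∫ u in Set.Iic (-1:ℝ), Real.sqrt v * Real.exp (-Real.pi * v * u^2) := by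
    rw [← gauss_Iio hv, hsplit]; ring
  rw [MeasureTheory.integral_const_mul 2, this]

lemma hiphi_pos : Tendsto (fun v : ℝ =>
    ∫ u in Set.Ioo (0:ℝ) 1, 2 * (Real.sqrt v * Real.exp (-Real.pi * v * u^2)))
    atTop (nhds 1) := by
  have htail := (tail_small measurableSet_Ici (fun u hu => by
      rw [abs_of_nonneg (le_trans (by norm_num) hu)]
      exact mem_Ici.1 hu) measurable_const (fun x => by norm_num) :
    Tendsto (fun v : ℝ => ∫ u in Set.Ici (1:ℝ),
      Real.sqrt v * Real.exp (-Real.pi * v * u^2) * (1:ℝ)) atTop (nhds 0))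
  have key : Tendsto (fun v : ℝ => 2 * ((1:ℝ)/2 - ∫ u in Set.Ici (1:ℝ),
      Real.sqrt v * Real.exp (-Real.pi * v * u^2) * (1:ℝ))) atTop (nhds 1) := by
    have := (tendsto_const_nhds (x := (1:ℝ)/2) (f := atTop)).sub htail
    have h2 := this.const_mul (2:ℝ)
    simpa using h2
  refine key.congr' ?_
  filter_upwards [eventually_gt_atTop (0:ℝ)] with v hv
  have hun : Set.Ioo (0:ℝ) 1 ∪ Set.Ici 1 = Set.Ioi 0 :=
    Set.Ioo_union_Ici_eq_Ioi (by norm_num)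
  have hF := integrable_gaussF hv (g := fun _ => (1:ℝ)) measurable_const (fun x => by norm_num)
  have hdisj : Disjoint (Set.Ioo (0:ℝ) 1) (Set.Ici (1:ℝ)) := by
    apply Set.disjoint_left.2; intro x hx hx2; exact absurd hx2 (not_le.2 hx.2)
  have hsplit := setIntegral_union (f := fun u : ℝ =>
      Real.sqrt v * Real.exp (-Real.pi * v * u^2) * (1:ℝ))
    (μ := volume) hdisj measurableSet_Ici hF.integrableOn hF.integrableOn
  rw [hun] at hsplit
  simp only [mul_one] at hsplit htail ⊢
  have : ∫ u in Set.Ioo (0:ℝ) 1, Real.sqrt v * Real.exp (-Real.pi * v * u^2)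
      = 1/2 - ∫ u in Set.Ici (1:ℝ), Real.sqrt v * Real.exp (-Real.pi * v * u^2) := by
    rw [← gauss_Ioi hv, hsplit]; ring
  rw [MeasureTheory.integral_const_mul 2, this]

lemma main_limit {g : ℝ → ℝ} (hg : Measurable g) (hb : ∀ x, |g x| ≤ 1) {Lm Lp : ℝ}
    (hgm : Tendsto g (nhdsWithin 0 (Set.Ioo (-1) 0)) (nhds Lm))
    (hgp : Tendsto g (nhdsWithin 0 (Set.Ioo 0 1)) (nhds Lp)) :
    Tendsto (fun v : ℝ => ∫ u : ℝ, Real.sqrt v * Real.exp (-Real.pi * v * u^2) * g u)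
      atTop (nhds ((Lm + Lp)/2)) := by
  have T1 := tail_small (S := Set.Iic (-1:ℝ)) measurableSet_Iic (fun u hu => by
      rw [abs_of_nonpos (le_trans hu (by norm_num))]; linarith [Set.mem_Iic.1 hu]) hg hb
  have T2 := tail_small (S := Set.Ici (1:ℝ)) measurableSet_Ici (fun u hu => by
      rw [abs_of_nonneg (le_trans (by norm_num) hu)]; exact Set.mem_Ici.1 hu) hg hb
  have hsub1 : Set.Ioo (-1:ℝ) 0 ⊆ Metric.ball (0:ℝ) 2 := fun x hx => by
    rw [Metric.mem_ball, Real.dist_eq, sub_zero]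
    rw [abs_lt]; constructor <;> [linarith [hx.1]; linarith [hx.2]]
  have hsub2 : Set.Ioo (0:ℝ) 1 ⊆ Metric.ball (0:ℝ) 2 := fun x hx => by
    rw [Metric.mem_ball, Real.dist_eq, sub_zero]
    rw [abs_lt]; constructor <;> [linarith [hx.1]; linarith [hx.2]]
  have P1 := peak_main measurableSet_Ioo hsub1 hg hb hiphi_neg hgm
  have P2 := peak_main measurableSet_Ioo hsub2 hg hb hiphi_pos hgp
  have sum := ((T1.add P1).add P2).add T2
  simp only [zero_add, add_zero] at sum
  have heq : Lm / 2 + Lp / 2 = (Lm + Lp) / 2 := by ring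
  rw [heq] at sum
  refine sum.congr' ?_
  filter_upwards [eventually_gt_atTop (0:ℝ)] with v hv
  have hF := integrable_gaussF hv hg hb
  have hun1 : Set.Iic (-1:ℝ) ∪ Set.Ioo (-1:ℝ) 0 = Set.Iio 0 :=
    Set.Iic_union_Ioo_eq_Iio (by norm_num)
  have hun2 : Set.Ioo (0:ℝ) 1 ∪ Set.Ici 1 = Set.Ioi 0 :=
    Set.Ioo_union_Ici_eq_Ioi (by norm_num)
  have hdisj1 : Disjoint (Set.Iic (-1:ℝ)) (Set.Ioo (-1:ℝ) 0) := by
    apply Set.disjoint_left.2; intro x hx hx2; exact absurd hx2.1 (not_lt.2 hx)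
  have hdisj2 : Disjoint (Set.Ioo (0:ℝ) 1) (Set.Ici (1:ℝ)) := by
    apply Set.disjoint_left.2; intro x hx hx2; exact absurd hx2 (not_le.2 hx.2)
  have hs1 := setIntegral_union (f := fun u : ℝ =>
      Real.sqrt v * Real.exp (-Real.pi * v * u^2) * g u) (μ := volume)
    hdisj1 measurableSet_Ioo hF.integrableOn hF.integrableOn
  have hs2 := setIntegral_union (f := fun u : ℝ =>
      Real.sqrt v * Real.exp (-Real.pi * v * u^2) * g u) (μ := volume)
    hdisj2 measurableSet_Ici hF.integrableOn hF.integrableOn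
  rw [hun1] at hs1; rw [hun2] at hs2
  rw [← integral_Iic_eq_integral_Iio] at hs1
  rw [← intervalIntegral.integral_Iic_add_Ioi (b := 0) hF.integrableOn hF.integrableOn,
    hs1, hs2]
  ring


section tau
variable {β β' m : ℝ}

lemma tau_pos (hm : 0 < m) (hβ' : 0 < β') (u : ℝ) :
    0 < (Real.sqrt (u^2 + 4*m) - u) / (2*β') := by
  apply div_pos _ (by linarith)
  have h1 : Real.sqrt (u^2) < Real.sqrt (u^2 + 4*m) :=
    Real.sqrt_lt_sqrt (sq_nonneg u) (by linarith)
  rw [Real.sqrt_sq_eq_abs] at h1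
  have := le_abs_self u
  linarith

lemma f_tau (hm : 0 < m) (hβ : 0 < β) (hβ' : 0 < β') (hββ' : β * β' = m) (u : ℝ) :
    β / ((Real.sqrt (u^2 + 4*m) - u) / (2*β')) -
      β' * ((Real.sqrt (u^2 + 4*m) - u) / (2*β')) = u := by
  have hs : Real.sqrt (u^2 + 4*m) ^ 2 = u^2 + 4*m :=
    Real.sq_sqrt (by positivity)
  have hnum : 0 < Real.sqrt (u^2 + 4*m) - u := by
    have h1 : Real.sqrt (u^2) < Real.sqrt (u^2 + 4*m) :=
      Real.sqrt_lt_sqrt (sq_nonneg u) (by linarith)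
    rw [Real.sqrt_sq_eq_abs] at h1
    have := le_abs_self u
    linarith
  field_simp
  nlinarith [hs, hnum]

lemma tau_f (hm : 0 < m) (hβ : 0 < β) (hβ' : 0 < β') (hββ' : β * β' = m) {t : ℝ} (ht : 0 < t) :
    (Real.sqrt ((β/t - β'*t)^2 + 4*m) - (β/t - β'*t)) / (2*β') = t := by
  have harg : (β/t - β'*t)^2 + 4*m = (β/t + β'*t)^2 := by
    rw [← hββ']; field_simp; ring
  rw [harg, Real.sqrt_sq (by positivity)]
  field_simp
  ring

lemma image_f (hm : 0 < m) (hβ : 0 < β) (hβ' : 0 < β') (hββ' : β * β' = m) :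
    (fun t => β/t - β'*t) '' Set.Ioi (0:ℝ) = Set.univ := by
  ext u
  simp only [Set.mem_image, Set.mem_univ, iff_true]
  exact ⟨(Real.sqrt (u^2 + 4*m) - u) / (2*β'), tau_pos hm hβ' u,
    f_tau hm hβ hβ' hββ' u⟩

lemma injOn_f (hβ : 0 < β) (hβ' : 0 < β') :
    Set.InjOn (fun t => β/t - β'*t) (Set.Ioi (0:ℝ)) := by
  have : StrictAntiOn (fun t => β/t - β'*t) (Set.Ioi (0:ℝ)) := by
    intro a ha b hb hab
    have h1 : β/b < β/a := div_lt_div_of_pos_left hβ ha hab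
    simp only
    nlinarith
  exact this.injOn

lemma hasDeriv_f (hβ : 0 < β) {t : ℝ} (ht : t ∈ Set.Ioi (0:ℝ)) :
    HasDerivWithinAt (fun t => β/t - β'*t) (-(β/t^2) - β') (Set.Ioi (0:ℝ)) t := by
  have ht' : t ≠ 0 := ne_of_gt ht
  have h1 : HasDerivAt (fun t : ℝ => β/t) (β * -(t^2)⁻¹) t := by
    simpa [div_eq_mul_inv] using (hasDerivAt_inv ht').const_mul β
  have h2 : HasDerivAt (fun t : ℝ => β'*t) β' t := by
    simpa using (hasDerivAt_id t).const_mul β'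
  have := (h1.sub h2).hasDerivWithinAt (s := Set.Ioi (0:ℝ))
  rw [show -(β/t^2) - β' = β * -(t^2)⁻¹ - β' by ring]
  exact this

end tau


section lim
variable {β β' m εϱ : ℝ} (hm : 0 < m) (hβ : 0 < β) (hβ' : 0 < β') (hββ' : β * β' = m)
  (hεϱ : 1 < εϱ)

-- limits of g̃ from each side
include hm hβ hβ' hββ' hεϱ in
lemma gtilde_limits :
    ∃ Lm Lp : ℝ,
      Tendsto (fun u => mfrac (Real.log ((Real.sqrt (u^2 + 4*m) - u) / (2*β')) / Real.log εϱ))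
        (nhdsWithin 0 (Set.Ioo (-1) 0)) (nhds Lm) ∧
      Tendsto (fun u => mfrac (Real.log ((Real.sqrt (u^2 + 4*m) - u) / (2*β')) / Real.log εϱ))
        (nhdsWithin 0 (Set.Ioo 0 1)) (nhds Lp) ∧
      (Lm + Lp) / 2 = mfrac (Real.log (Real.sqrt |β / β'|) / Real.log εϱ) := by
  have hL : 0 < Real.log εϱ := Real.log_pos hεϱ
  set L := Real.log εϱ with hLdef
  set τ : ℝ → ℝ := fun u => (Real.sqrt (u^2 + 4*m) - u) / (2*β') with hτ
  have hτpos : ∀ u, 0 < τ u := fun u => tau_pos hm hβ' u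
  set h : ℝ → ℝ := fun u => Real.log (τ u) / L with hh
  -- τ 0 = √|β/β'|
  have hτ0 : τ 0 = Real.sqrt |β / β'| := by
    have habs : |β / β'| = β / β' := abs_of_pos (div_pos hβ hβ')
    have hq : β / β' = m / β'^2 := by rw [← hββ']; field_simp
    rw [habs, hq, Real.sqrt_div hm.le, Real.sqrt_sq hβ'.le, hτ]
    simp only [ne_eq, OfNat.ofNat_ne_zero, not_false_eq_true, zero_pow, zero_add, sub_zero]
    rw [show (4:ℝ)*m = 2^2*m by norm_num, Real.sqrt_mul (by positivity), Real.sqrt_sq (by norm_num)]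
    ring
  -- continuity of h at 0
  have hτcont : Continuous τ := by
    apply Continuous.div_const
    exact (Real.continuous_sqrt.comp (by continuity)).sub continuous_id
  have hhcont : ContinuousAt h 0 := by
    apply ContinuousAt.div_const
    exact (Real.continuousAt_log (hτpos 0).ne').comp hτcont.continuousAt
  set a₀ : ℝ := h 0 with ha₀
  have hgoal_eq : Real.log (Real.sqrt |β / β'|) / L = a₀ := by
    have hrfl : a₀ = Real.log (τ 0) / L := rfl
    rw [hrfl, hτ0]
  -- strict comparisons
  have hneg : ∀ u < (0:ℝ), a₀ < h u := by
    intro u hu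
    have hτgt : τ 0 < τ u := by
      rw [hτ]
      apply div_lt_div_of_pos_right _ (by linarith)
      have : Real.sqrt (0^2 + 4*m) ≤ Real.sqrt (u^2 + 4*m) :=
        Real.sqrt_le_sqrt (by nlinarith [sq_nonneg u])
      linarith
    exact div_lt_div_of_pos_right (Real.log_lt_log (hτpos 0) hτgt) hL
  have hpos : ∀ u, (0:ℝ) < u → h u < a₀ := by
    intro u hu
    have hτlt : τ u < τ 0 := by
      rw [hτ]
      apply div_lt_div_of_pos_right _ (by linarith)
      have h4m : Real.sqrt (0^2+4*m) = Real.sqrt (4*m) := by norm_num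
      rw [h4m]
      have hy : 0 < Real.sqrt (4*m) + u := by positivity
      have : Real.sqrt (u^2 + 4*m) < Real.sqrt (4*m) + u := by
        rw [Real.sqrt_lt' hy]
        nlinarith [Real.sq_sqrt (by positivity : (0:ℝ) ≤ 4*m),
          Real.sqrt_pos.2 (by positivity : (0:ℝ) < 4*m)]
      linarith
    exact div_lt_div_of_pos_right (Real.log_lt_log (hτpos u) hτlt) hL
  have htend : Tendsto h (nhds 0) (nhds a₀) := hhcont.tendsto
  by_cases hint : ∃ n : ℤ, a₀ = n
  · obtain ⟨n, hn⟩ := hint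
    refine ⟨0, 1, ?_, ?_, ?_⟩
    · -- from the left: h u ∈ (n, n+1), mfrac = h - n → 0
      have htd : Tendsto h (nhdsWithin 0 (Set.Ioo (-1) 0)) (nhds a₀) :=
        htend.mono_left nhdsWithin_le_nhds
      have hev : ∀ᶠ u in nhdsWithin 0 (Set.Ioo (-1) 0), h u ∈ Set.Ioo (n:ℝ) (n+1) := by
        have h1 : ∀ᶠ u in nhdsWithin 0 (Set.Ioo (-1) 0), h u < n + 1 :=
          htd.eventually (Filter.Tendsto.eventually_lt_const (by rw [← hn]; linarith) tendsto_id)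
        filter_upwards [h1, self_mem_nhdsWithin] with u hu1 hu2
        exact ⟨hn ▸ hneg u hu2.2, hu1⟩
      have : Tendsto (fun u => h u - n) (nhdsWithin 0 (Set.Ioo (-1) 0)) (nhds 0) := by
        have := htd.sub_const (n:ℝ)
        rwa [hn, sub_self] at this
      refine this.congr' ?_
      filter_upwards [hev] with u hu
      exact (mfrac_eq_of_mem_Ioo hu).symm
    · -- from the right: h u ∈ (n-1, n), mfrac = h - (n-1) → 1
      have htd : Tendsto h (nhdsWithin 0 (Set.Ioo 0 1)) (nhds a₀) :=
        htend.mono_left nhdsWithin_le_nhds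
      have hev : ∀ᶠ u in nhdsWithin 0 (Set.Ioo 0 1), h u ∈ Set.Ioo ((n-1:ℤ):ℝ) ((n-1:ℤ)+1) := by
        have h1 : ∀ᶠ u in nhdsWithin 0 (Set.Ioo 0 1), ((n-1:ℤ):ℝ) < h u := by
          apply htd.eventually (Filter.Tendsto.eventually_const_lt _ tendsto_id)
          push_cast; rw [hn]; push_cast; linarith
        filter_upwards [h1, self_mem_nhdsWithin] with u hu1 hu2
        refine ⟨hu1, ?_⟩
        push_cast
        have := hpos u hu2.1
        rw [hn] at this
        push_cast at this ⊢
        linarith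
      have : Tendsto (fun u => h u - ((n-1:ℤ):ℝ)) (nhdsWithin 0 (Set.Ioo 0 1)) (nhds 1) := by
        have h2 := htd.sub_const ((n-1:ℤ):ℝ)
        have : a₀ - ((n-1:ℤ):ℝ) = 1 := by rw [hn]; push_cast; ring
        rwa [this] at h2
      refine this.congr' ?_
      filter_upwards [hev] with u hu
      exact (mfrac_eq_of_mem_Ioo hu).symm
    · rw [hgoal_eq]
      have : mfrac a₀ = 1/2 := by unfold mfrac; rw [if_pos ⟨n, hn⟩]
      rw [this]; norm_num
  · -- non-integer case
    set k : ℤ := ⌊a₀⌋ with hk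
    have hlow : (k:ℝ) < a₀ := by
      rcases lt_or_eq_of_le (Int.floor_le a₀) with h | h
      · exact h
      · exact absurd ⟨k, h.symm⟩ hint
    have hhigh : a₀ < (k:ℝ) + 1 := by
      have := Int.lt_floor_add_one a₀
      push_cast at this ⊢
      linarith
    have key : ∀ s : Set ℝ, Tendsto (fun u => mfrac (h u)) (nhdsWithin 0 s)
        (nhds (Int.fract a₀)) := by
      intro s
      have htd : Tendsto h (nhdsWithin 0 s) (nhds a₀) := htend.mono_left nhdsWithin_le_nhds
      have hev : ∀ᶠ u in nhdsWithin 0 s, h u ∈ Set.Ioo (k:ℝ) ((k:ℝ)+1) :=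
        htd.eventually (Ioo_mem_nhds hlow hhigh)
      have h3 : Tendsto (fun u => h u - (k:ℝ)) (nhdsWithin 0 s) (nhds (Int.fract a₀)) := by
        have := htd.sub_const (k:ℝ)
        rwa [show a₀ - (k:ℝ) = Int.fract a₀ from rfl] at this
      refine h3.congr' ?_
      filter_upwards [hev] with u hu
      exact (mfrac_eq_of_mem_Ioo hu).symm
    refine ⟨Int.fract a₀, Int.fract a₀, key _, key _, ?_⟩
    rw [hgoal_eq]
    have : mfrac a₀ = Int.fract a₀ := by unfold mfrac; rw [if_neg hint]
    rw [this]; ring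

end lim


lemma key_pos (εϱ : ℝ) (hεϱ : 1 < εϱ) (β β' m : ℝ) (hm : 0 < m) (hββ' : β * β' = m)
    (hβ : 0 < β) (hβ' : 0 < β') :
    Filter.Tendsto
      (fun v : ℝ =>
        Real.exp (2 * Real.pi * m * v) *
          (2 * Real.log εϱ *
            ∫ t in Set.Ioi (0 : ℝ),
              ((β * Real.sqrt v / t + β' * Real.sqrt v * t) *
                  Real.exp (-Real.pi *
                    ((β * Real.sqrt v / t) ^ 2 + (β' * Real.sqrt v * t) ^ 2))) *
                mfrac (Real.log t / Real.log εϱ) / t))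
      Filter.atTop
      (nhds (2 * Real.log εϱ * mfrac (Real.log (Real.sqrt |β / β'|) / Real.log εϱ))) := by
  obtain ⟨Lm, Lp, hLm, hLp, hsum⟩ := gtilde_limits hm hβ hβ' hββ' hεϱ
  set g : ℝ → ℝ := fun u =>
    mfrac (Real.log ((Real.sqrt (u^2 + 4*m) - u) / (2*β')) / Real.log εϱ) with hg
  have hgmeas : Measurable g := by
    apply measurable_mfrac.comp
    apply Measurable.div_const
    apply Real.measurable_log.comp
    apply Measurable.div_const
    exact ((Real.continuous_sqrt.comp (by continuity)).sub continuous_id).measurable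
  have hgb : ∀ x, |g x| ≤ 1 := fun x => abs_mfrac_le_one _
  have hmain := (main_limit hgmeas hgb hLm hLp).const_mul (2 * Real.log εϱ)
  rw [hsum] at hmain
  refine hmain.congr' ?_
  filter_upwards [eventually_gt_atTop (0:ℝ)] with v hv
  have hsq : Real.sqrt v ^ 2 = v := Real.sq_sqrt hv.le
  -- change of variables
  have hsubst := integral_image_eq_integral_abs_deriv_smul (f := fun t => β/t - β'*t)
    (f' := fun t => -(β/t^2) - β') measurableSet_Ioi
    (fun t ht => hasDeriv_f hβ ht) (injOn_f hβ hβ')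
    (fun u => Real.sqrt v * Real.exp (-Real.pi * v * u^2) * g u)
  rw [image_f hm hβ hβ' hββ'] at hsubst
  have hint : ∫ u : ℝ, Real.sqrt v * Real.exp (-Real.pi * v * u^2) * g u
      = ∫ t in Set.Ioi (0:ℝ), |(-(β/t^2) - β')| •
          (Real.sqrt v * Real.exp (-Real.pi * v * (β/t - β'*t)^2) * g (β/t - β'*t)) := by
    rw [← hsubst, ← MeasureTheory.setIntegral_univ]
  rw [hint]
  -- pointwise identity on Ioi 0
  have hcongr : ∀ t ∈ Set.Ioi (0:ℝ), |(-(β/t^2) - β')| •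
      (Real.sqrt v * Real.exp (-Real.pi * v * (β/t - β'*t)^2) * g (β/t - β'*t))
      = Real.exp (2 * Real.pi * m * v) *
        (((β * Real.sqrt v / t + β' * Real.sqrt v * t) *
          Real.exp (-Real.pi * ((β * Real.sqrt v / t) ^ 2 + (β' * Real.sqrt v * t) ^ 2))) *
            mfrac (Real.log t / Real.log εϱ) / t) := by
    intro t ht
    have ht' : (0:ℝ) < t := ht
    have habs : |(-(β/t^2) - β')| = β/t^2 + β' := by
      have hneg : -(β/t^2) - β' < 0 := by
        have : 0 < β/t^2 := div_pos hβ (pow_pos ht' 2)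
        linarith
      rw [abs_of_neg hneg]; ring
    have hgf : g (β/t - β'*t) = mfrac (Real.log t / Real.log εϱ) := by
      rw [hg]
      simp only
      rw [tau_f hm hβ hβ' hββ' ht']
    have hexp : -Real.pi * ((β * Real.sqrt v / t) ^ 2 + (β' * Real.sqrt v * t) ^ 2)
        = -Real.pi * v * (β/t - β'*t)^2 + -(2 * Real.pi * m * v) := by
      have h1 : (β * Real.sqrt v / t) ^ 2 = β^2 * v / t^2 := by
        rw [div_pow, mul_pow, hsq]
      have h2 : (β' * Real.sqrt v * t) ^ 2 = β'^2 * v * t^2 := by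
        rw [mul_pow, mul_pow, hsq]
      rw [h1, h2, ← hββ']
      field_simp
      ring
    have hEE : Real.exp (2 * Real.pi * m * v) * Real.exp (-(2 * Real.pi * m * v)) = 1 := by
      rw [← Real.exp_add]; simp
    have hF : (β * Real.sqrt v / t + β' * Real.sqrt v * t) / t = (β/t^2 + β') * Real.sqrt v := by
      field_simp
    rw [habs, hgf, hexp, Real.exp_add, smul_eq_mul]
    linear_combination (-(Real.exp (-Real.pi*v*(β/t-β'*t)^2) * mfrac (Real.log t / Real.log εϱ) *
        (β*Real.sqrt v/t + β'*Real.sqrt v*t) / t)) * hEE +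
      (-(Real.exp (2*Real.pi*m*v) * Real.exp (-(2*Real.pi*m*v)) *
        Real.exp (-Real.pi*v*(β/t-β'*t)^2) * mfrac (Real.log t / Real.log εϱ))) * hF +
      (β' * Real.sqrt v * Real.exp (-Real.pi*v*(β/t-β'*t)^2) * mfrac (Real.log t / Real.log εϱ) *
        (t*t⁻¹ - 1)) * hEE
  rw [setIntegral_congr_fun measurableSet_Ioi hcongr]
  rw [MeasureTheory.integral_const_mul]
  ring


/-- The archimedean limit computation (eq. (claim)) in the proof of Theorem 2.8:
with `φ⁺_∞(x₁,x₂) = (x₁+x₂)e^{-π(x₁²+x₂²)}`, `m = ββ' > 0`, `sgn β = sgn β'`, and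
`ε_ϱ > 1`, the limit as `v → ∞` of
`e^{2πmv} · 2 log ε_ϱ ∫₀^∞ φ⁺_∞(β√v/t, β'√v·t) {log t/log ε_ϱ} dt/t`
equals `sgn(β) · 2 log ε_ϱ · {log √|β/β'| / log ε_ϱ}`. -/
theorem stmt_9 (εϱ : ℝ) (hεϱ : 1 < εϱ) (β β' m : ℝ) (hm : 0 < m) (hββ' : β * β' = m)
    (hsgn : Real.sign β = Real.sign β') :
    Filter.Tendsto
      (fun v : ℝ =>
        Real.exp (2 * Real.pi * m * v) *
          (2 * Real.log εϱ *
            ∫ t in Set.Ioi (0 : ℝ),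
              ((β * Real.sqrt v / t + β' * Real.sqrt v * t) *
                  Real.exp (-Real.pi *
                    ((β * Real.sqrt v / t) ^ 2 + (β' * Real.sqrt v * t) ^ 2))) *
                mfrac (Real.log t / Real.log εϱ) / t))
      Filter.atTop
      (nhds (Real.sign β *
        (2 * Real.log εϱ * mfrac (Real.log (Real.sqrt |β / β'|) / Real.log εϱ)))) := by
  have hprod : 0 < β * β' := hββ' ▸ hm
  rcases mul_pos_iff.1 hprod with ⟨hβ, hβ'⟩ | ⟨hβ, hβ'⟩
  · rw [Real.sign_of_pos hβ, one_mul]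
    exact key_pos εϱ hεϱ β β' m hm hββ' hβ hβ'
  · have hk := key_pos εϱ hεϱ (-β) (-β') m hm (by rw [neg_mul_neg]; exact hββ')
      (by linarith) (by linarith)
    have habs : |(-β) / (-β')| = |β / β'| := by rw [neg_div_neg_eq]
    rw [habs] at hk
    have hfun : (fun v : ℝ =>
        Real.exp (2 * Real.pi * m * v) *
          (2 * Real.log εϱ *
            ∫ t in Set.Ioi (0 : ℝ),
              ((β * Real.sqrt v / t + β' * Real.sqrt v * t) *
                  Real.exp (-Real.pi *
                    ((β * Real.sqrt v / t) ^ 2 + (β' * Real.sqrt v * t) ^ 2))) *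
                mfrac (Real.log t / Real.log εϱ) / t))
        = fun v : ℝ => -(Real.exp (2 * Real.pi * m * v) *
          (2 * Real.log εϱ *
            ∫ t in Set.Ioi (0 : ℝ),
              (((-β) * Real.sqrt v / t + (-β') * Real.sqrt v * t) *
                  Real.exp (-Real.pi *
                    (((-β) * Real.sqrt v / t) ^ 2 + ((-β') * Real.sqrt v * t) ^ 2))) *
                mfrac (Real.log t / Real.log εϱ) / t)) := by
      funext v
      have hpt : ∀ t : ℝ,
          (((-β) * Real.sqrt v / t + (-β') * Real.sqrt v * t) *
            Real.exp (-Real.pi *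
              (((-β) * Real.sqrt v / t) ^ 2 + ((-β') * Real.sqrt v * t) ^ 2))) *
            mfrac (Real.log t / Real.log εϱ) / t
          = -(((β * Real.sqrt v / t + β' * Real.sqrt v * t) *
            Real.exp (-Real.pi *
              ((β * Real.sqrt v / t) ^ 2 + (β' * Real.sqrt v * t) ^ 2))) *
            mfrac (Real.log t / Real.log εϱ) / t) := by
        intro t
        rw [show ((-β) * Real.sqrt v / t) ^ 2 = (β * Real.sqrt v / t) ^ 2 by ring,
          show ((-β') * Real.sqrt v * t) ^ 2 = (β' * Real.sqrt v * t) ^ 2 by ring]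
        ring
      simp_rw [hpt, MeasureTheory.integral_neg]
      ring
    rw [Real.sign_of_neg hβ, hfun, neg_one_mul]
    exact hk.neg
end

section
/- In the Fock model of the Weil representation for the dual pair (SL₂, O(2,2)), with polynomial model ℂ[𝔷₁,𝔷₂,𝔷₃,𝔷₄], 𝔳 = 𝔷₁+i𝔷₂, 𝔴 = 𝔷₃-i𝔷₄, and operators L₁+L₂ acting as 8π(∂_𝔳 + ∂_{𝔳̄})∂_𝔴 - (1/8π)(𝔳̄+𝔳)𝔴̄ and L acting as -8π ∂_𝔳∂_{𝔳̄} + (1/8π)𝔴𝔴̄, one has (L₁+L₂)(𝔴^{r+1} Q_r(𝔳,𝔳̄)) = -L(Q_r(𝔳,𝔳̄)(𝔳+𝔳̄)𝔴^r) for every r ≥ 0, where Q_r(X,Y) = (X+Y)^r P_r((X-Y)/(X+Y)). -/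
open MvPolynomial

/-- `Q_r(𝔳,𝔳̄) = ∑_{s=0}^r C(r,s)² 𝔳^{r-s}(-𝔳̄)^s` in the Fock polynomial model
`ℂ[𝔷₁,…]` with variables `0 ↦ 𝔳`, `1 ↦ 𝔳̄`, `2 ↦ 𝔴`, `3 ↦ 𝔴̄`. -/
noncomputable def QmvC (r : ℕ) : MvPolynomial (Fin 4) ℂ :=
  ∑ s ∈ Finset.range (r + 1), C ((r.choose s : ℂ) ^ 2) * (X 0) ^ (r - s) * (-X 1) ^ s

/-- The lowering operator `ω(L) = -8π ∂_𝔳∂_𝔳̄ + (1/8π)𝔴𝔴̄` in the Fock model. -/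
noncomputable def Lop (P : MvPolynomial (Fin 4) ℂ) : MvPolynomial (Fin 4) ℂ :=
  -C (8 * (Real.pi : ℂ)) * pderiv 0 (pderiv 1 P)
    + C (1 / (8 * (Real.pi : ℂ))) * (X 2 * X 3 * P)

/-- `ω(L₁) = 8π ∂_𝔳∂_𝔴 - (1/8π)𝔳̄𝔴̄`. -/
noncomputable def L1op (P : MvPolynomial (Fin 4) ℂ) : MvPolynomial (Fin 4) ℂ :=
  C (8 * (Real.pi : ℂ)) * pderiv 0 (pderiv 2 P)
    - C (1 / (8 * (Real.pi : ℂ))) * (X 1 * X 3 * P)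

/-- `ω(L₂) = 8π ∂_𝔳̄∂_𝔴 - (1/8π)𝔳𝔴̄`. -/
noncomputable def L2op (P : MvPolynomial (Fin 4) ℂ) : MvPolynomial (Fin 4) ℂ :=
  C (8 * (Real.pi : ℂ)) * pderiv 1 (pderiv 2 P)
    - C (1 / (8 * (Real.pi : ℂ))) * (X 0 * X 3 * P)

/- ### Auxiliary material -/

/-- signed coefficient of `Q_r` -/
noncomputable def bb (r s : ℕ) : ℂ := (-1) ^ s * (r.choose s : ℂ) ^ 2

lemma D0 (a : ℂ) (m n : ℕ) :
    pderiv (0 : Fin 4) (C a * X 0 ^ m * X 1 ^ n) = C (a * m) * X 0 ^ (m - 1) * X 1 ^ n := by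
  rw [mul_assoc, pderiv_C_mul, pderiv_mul, pderiv_pow, pderiv_pow,
    pderiv_X_self, pderiv_X_of_ne (by decide)]
  simp only [map_mul, map_natCast]
  ring

lemma D1 (a : ℂ) (m n : ℕ) :
    pderiv (1 : Fin 4) (C a * X 0 ^ m * X 1 ^ n) = C (a * n) * X 0 ^ m * X 1 ^ (n - 1) := by
  rw [mul_assoc, pderiv_C_mul, pderiv_mul, pderiv_pow, pderiv_pow,
    pderiv_X_self, pderiv_X_of_ne (by decide)]
  simp only [map_mul, map_natCast]
  ring

lemma D2 (a : ℂ) (m n : ℕ) :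
    pderiv (2 : Fin 4) (C a * X 0 ^ m * X 1 ^ n) = 0 := by
  rw [mul_assoc, pderiv_C_mul, pderiv_mul, pderiv_pow, pderiv_pow,
    pderiv_X_of_ne (by decide), pderiv_X_of_ne (by decide)]
  ring

lemma Q_eq (r : ℕ) :
    QmvC r = ∑ s ∈ Finset.range (r + 1), C (bb r s) * X 0 ^ (r - s) * X 1 ^ s := by
  unfold QmvC bb
  refine Finset.sum_congr rfl fun s _ => ?_
  have hneg : (-X 1 : MvPolynomial (Fin 4) ℂ) = C (-1 : ℂ) * X 1 := by
    rw [map_neg, map_one]; ring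
  rw [hneg, mul_pow, ← map_pow, map_mul, map_pow]
  ring

lemma d0Q (r : ℕ) : pderiv (0 : Fin 4) (QmvC r)
    = ∑ s ∈ Finset.range (r + 1),
        C (bb r s * ((r - s : ℕ) : ℂ)) * X 0 ^ (r - s - 1) * X 1 ^ s := by
  rw [Q_eq, map_sum]
  exact Finset.sum_congr rfl fun s _ => D0 _ _ _

lemma d1Q (r : ℕ) : pderiv (1 : Fin 4) (QmvC r)
    = ∑ s ∈ Finset.range (r + 1),
        C (bb r s * (s : ℂ)) * X 0 ^ (r - s) * X 1 ^ (s - 1) := by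
  rw [Q_eq, map_sum]
  exact Finset.sum_congr rfl fun s _ => D1 _ _ _

lemma d01Q (r : ℕ) : pderiv (0 : Fin 4) (pderiv (1 : Fin 4) (QmvC r))
    = ∑ s ∈ Finset.range (r + 1),
        C (bb r s * (s : ℂ) * ((r - s : ℕ) : ℂ)) * X 0 ^ (r - s - 1) * X 1 ^ (s - 1) := by
  rw [d1Q, map_sum]
  exact Finset.sum_congr rfl fun s _ => D0 _ _ _

lemma d2Q (r : ℕ) : pderiv (2 : Fin 4) (QmvC r) = 0 := by
  rw [Q_eq, map_sum]
  exact Finset.sum_eq_zero fun s _ => D2 _ _ _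

lemma perterm (r s : ℕ) (hs : s ≤ r) :
    C (bb r s * (s : ℂ) * ((r - s : ℕ) : ℂ)) * (X 0 : MvPolynomial (Fin 4) ℂ) ^ (r - s - 1)
        * X 1 ^ (s - 1) * (X 0 + X 1)
      = C (bb r s * (s : ℂ) * ((r - s : ℕ) : ℂ)) * X 0 ^ (r - s) * X 1 ^ (s - 1)
        + C (bb r s * (s : ℂ) * ((r - s : ℕ) : ℂ)) * X 0 ^ (r - s - 1) * X 1 ^ s := by
  rcases Nat.eq_zero_or_pos s with h0 | h0
  · subst h0; simp
  rcases eq_or_lt_of_le hs with h1 | h1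
  · subst h1; simp [Nat.sub_self]
  obtain ⟨t, ht⟩ : ∃ t, s = t + 1 := ⟨s - 1, by omega⟩
  subst ht
  obtain ⟨m, hm⟩ : ∃ m, r - (t + 1) = m + 1 := ⟨r - (t + 1) - 1, by omega⟩
  rw [hm]
  simp only [Nat.add_sub_cancel]
  ring

lemma coeff_id (r s : ℕ) (hs : s < r) :
    bb r (s + 1) * ((s + 1 : ℕ) : ℂ) * ((r - (s + 1) : ℕ) : ℂ)
        - (r : ℂ) * bb r (s + 1) * ((s + 1 : ℕ) : ℂ)
      = (r : ℂ) * bb r s * ((r - s : ℕ) : ℂ) - bb r s * (s : ℂ) * ((r - s : ℕ) : ℂ) := by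
  have h5 : ((s + 1 : ℕ) : ℂ) = (s : ℂ) + 1 := by push_cast; ring
  rw [h5]
  have hc : ((r.choose (s + 1) : ℕ) : ℂ) * ((s : ℂ) + 1)
      = ((r.choose s : ℕ) : ℂ) * ((r : ℂ) - (s : ℂ)) := by
    have h1 := Nat.choose_succ_right_eq r s
    calc ((r.choose (s + 1) : ℕ) : ℂ) * ((s : ℂ) + 1)
        = ((r.choose (s + 1) * (s + 1) : ℕ) : ℂ) := by push_cast; ring
      _ = ((r.choose s * (r - s) : ℕ) : ℂ) := by rw [h1]
      _ = ((r.choose s : ℕ) : ℂ) * ((r : ℂ) - (s : ℂ)) := by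
          push_cast [Nat.cast_sub hs.le]; ring
  have h3 : ((r - (s + 1) : ℕ) : ℂ) = (r : ℂ) - (s : ℂ) - 1 := by
    push_cast [Nat.cast_sub (by omega : s + 1 ≤ r)]; ring
  have h4 : ((r - s : ℕ) : ℂ) = (r : ℂ) - (s : ℂ) := by
    push_cast [Nat.cast_sub hs.le]; ring
  rw [h3, h4]
  unfold bb
  linear_combination ((-1 : ℂ) ^ s * (((r.choose (s + 1) : ℕ) : ℂ) * ((s : ℂ) + 1)
    + ((r.choose s : ℕ) : ℂ) * ((r : ℂ) - (s : ℂ)))) * hc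

lemma shift (r : ℕ) :
    ∑ s ∈ Finset.range (r + 1),
        C (bb r s * (s : ℂ) * ((r - s : ℕ) : ℂ) - (r : ℂ) * bb r s * (s : ℂ))
          * (X 0 : MvPolynomial (Fin 4) ℂ) ^ (r - s) * X 1 ^ (s - 1)
      = ∑ s ∈ Finset.range (r + 1),
        C ((r : ℂ) * bb r s * ((r - s : ℕ) : ℂ) - bb r s * (s : ℂ) * ((r - s : ℕ) : ℂ))
          * X 0 ^ (r - s - 1) * X 1 ^ s := by
  rw [Finset.sum_range_succ' _ r, Finset.sum_range_succ]
  simp only [Nat.cast_zero, mul_zero, zero_mul, Nat.sub_self, sub_zero, sub_self,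
    map_zero, add_zero]
  refine Finset.sum_congr rfl fun s hs => ?_
  have hsr : s < r := Finset.mem_range.mp hs
  have he1 : s + 1 - 1 = s := by omega
  have he2 : r - (s + 1) = r - s - 1 := by omega
  rw [he1, coeff_id r s hsr, he2]

lemma core (r : ℕ) :
    pderiv (0 : Fin 4) (pderiv (1 : Fin 4) (QmvC r)) * (X 0 + X 1)
      = C ((r : ℕ) : ℂ) * (pderiv (0 : Fin 4) (QmvC r) + pderiv (1 : Fin 4) (QmvC r)) := by
  rw [d01Q, d0Q, d1Q, Finset.sum_mul, mul_add, Finset.mul_sum, Finset.mul_sum]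
  rw [Finset.sum_congr rfl fun s hs =>
    perterm r s (by have := Finset.mem_range.mp hs; omega)]
  rw [Finset.sum_add_distrib]
  rw [Finset.sum_congr rfl fun s (_ : s ∈ Finset.range (r + 1)) =>
    (show C ((r : ℕ) : ℂ) * (C (bb r s * ((r - s : ℕ) : ℂ))
            * (X 0 : MvPolynomial (Fin 4) ℂ) ^ (r - s - 1) * X 1 ^ s)
        = C ((r : ℂ) * bb r s * ((r - s : ℕ) : ℂ)) * X 0 ^ (r - s - 1) * X 1 ^ s by
      simp only [map_mul]; ring)]
  rw [Finset.sum_congr rfl fun s (_ : s ∈ Finset.range (r + 1)) =>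
    (show C ((r : ℕ) : ℂ) * (C (bb r s * (s : ℂ))
            * (X 0 : MvPolynomial (Fin 4) ℂ) ^ (r - s) * X 1 ^ (s - 1))
        = C ((r : ℂ) * bb r s * (s : ℂ)) * X 0 ^ (r - s) * X 1 ^ (s - 1) by
      simp only [map_mul]; ring)]
  rw [← sub_eq_sub_iff_add_eq_add, ← Finset.sum_sub_distrib, ← Finset.sum_sub_distrib]
  rw [Finset.sum_congr rfl fun s (_ : s ∈ Finset.range (r + 1)) =>
    (show C (bb r s * (s : ℂ) * ((r - s : ℕ) : ℂ))
            * (X 0 : MvPolynomial (Fin 4) ℂ) ^ (r - s) * X 1 ^ (s - 1)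
          - C ((r : ℂ) * bb r s * (s : ℂ)) * X 0 ^ (r - s) * X 1 ^ (s - 1)
        = C (bb r s * (s : ℂ) * ((r - s : ℕ) : ℂ) - (r : ℂ) * bb r s * (s : ℂ))
          * X 0 ^ (r - s) * X 1 ^ (s - 1) by
      simp only [map_sub]; ring)]
  rw [Finset.sum_congr rfl fun s (_ : s ∈ Finset.range (r + 1)) =>
    (show C ((r : ℂ) * bb r s * ((r - s : ℕ) : ℂ))
            * (X 0 : MvPolynomial (Fin 4) ℂ) ^ (r - s - 1) * X 1 ^ s
          - C (bb r s * (s : ℂ) * ((r - s : ℕ) : ℂ)) * X 0 ^ (r - s - 1) * X 1 ^ s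
        = C ((r : ℂ) * bb r s * ((r - s : ℕ) : ℂ) - bb r s * (s : ℂ) * ((r - s : ℕ) : ℂ))
          * X 0 ^ (r - s - 1) * X 1 ^ s by
      simp only [map_sub]; ring)]
  exact shift r

lemma dX2pow0 (r : ℕ) : pderiv (0 : Fin 4) ((X 2 : MvPolynomial (Fin 4) ℂ) ^ r) = 0 := by
  rw [pderiv_pow, pderiv_X_of_ne (by decide)]; ring

lemma dX2pow1 (r : ℕ) : pderiv (1 : Fin 4) ((X 2 : MvPolynomial (Fin 4) ℂ) ^ r) = 0 := by
  rw [pderiv_pow, pderiv_X_of_ne (by decide)]; ring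

/-- `(L₁+L₂)(𝔴^{r+1} Q_r(𝔳,𝔳̄)) = -L(Q_r(𝔳,𝔳̄)(𝔳+𝔳̄)𝔴^r)`. -/
theorem stmt_11 (r : ℕ) :
    L1op ((X 2) ^ (r + 1) * QmvC r) + L2op ((X 2) ^ (r + 1) * QmvC r)
      = -Lop (QmvC r * (X 0 + X 1) * (X 2) ^ r) := by
  have h2 : pderiv (2 : Fin 4) (X 2 ^ (r + 1) * QmvC r)
      = C (((r : ℕ) : ℂ) + 1) * (X 2 ^ r * QmvC r) := by
    rw [pderiv_mul, d2Q, pderiv_pow, pderiv_X_self, Nat.add_sub_cancel, mul_zero, add_zero,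
      mul_one]
    have : ((r + 1 : ℕ) : MvPolynomial (Fin 4) ℂ) = C (((r : ℕ) : ℂ) + 1) := by
      push_cast [map_natCast, map_add, map_one]; ring
    rw [← this]; push_cast; ring
  have key : pderiv (0 : Fin 4) (pderiv (1 : Fin 4) (QmvC r * (X 0 + X 1)))
      = C (((r : ℕ) : ℂ) + 1)
        * (pderiv (0 : Fin 4) (QmvC r) + pderiv (1 : Fin 4) (QmvC r)) := by
    have hx1 : pderiv (1 : Fin 4) (X 0 + X 1 : MvPolynomial (Fin 4) ℂ) = 1 := by
      rw [map_add, pderiv_X_self, pderiv_X_of_ne (by decide)]; ring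
    have hx0 : pderiv (0 : Fin 4) (X 0 + X 1 : MvPolynomial (Fin 4) ℂ) = 1 := by
      rw [map_add, pderiv_X_self, pderiv_X_of_ne (by decide)]; ring
    rw [pderiv_mul, hx1, mul_one, map_add, pderiv_mul, hx0, mul_one, core, map_add, map_one]
    ring
  unfold L1op L2op Lop
  rw [h2, pderiv_C_mul, pderiv_C_mul, pderiv_mul, pderiv_mul, dX2pow0, dX2pow1]
  rw [pderiv_mul (f := QmvC r * (X 0 + X 1)) (g := X 2 ^ r), dX2pow1, mul_zero, add_zero]
  rw [pderiv_mul (f := pderiv 1 (QmvC r * (X 0 + X 1))) (g := X 2 ^ r), dX2pow0,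
    mul_zero, add_zero]
  rw [key]
  ring
end

section
/- Let A, B ∈ ℝ with A > 0, and define K(𝐯) = exp(-π(A/√𝐯 - B√𝐯)²)·(A/√𝐯 + B√𝐯) for 𝐯 > 0. Then for any constants C > 0, s ∈ ℝ, ε ∈ (0,1), and a,b,c ∈ ℕ₀, with B ranging in a compact subset of ℝ: (i) ∫₀^{A^{1-ε}} e^{-C𝐯}𝐯^s K(𝐯) d𝐯/𝐯 ≪ e^{-A^{ε/2}}, and (ii) ∫_{A^{1-ε}}^∞ e^{-C𝐯}𝐯^s K(𝐯) d𝐯/𝐯 ≪ e^{-A^{(1-ε)/2}} as A → ∞. -/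
set_option maxHeartbeats 1000000


open MeasureTheory

/-- `K(𝐯) = e^{-π(A/√𝐯 - B√𝐯)²}(A/√𝐯 + B√𝐯)`. -/
noncomputable def Kker (A B v : ℝ) : ℝ :=
  Real.exp (-Real.pi * (A / Real.sqrt v - B * Real.sqrt v) ^ 2) *
    (A / Real.sqrt v + B * Real.sqrt v)

open Real Set in
lemma aux_pow_le_exp (x : ℝ) (hx : 0 ≤ x) (k : ℕ) : x ^ k ≤ k.factorial * Real.exp x := by
  have h := Real.sum_le_exp_of_nonneg hx (k + 1)
  have h2 : x ^ k / k.factorial ≤ ∑ i ∈ Finset.range (k + 1), x ^ i / i.factorial :=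
    Finset.single_le_sum (f := fun i => x ^ i / (i.factorial : ℝ))
      (fun i _ => by positivity) (Finset.self_mem_range_succ k)
  have hk : (0:ℝ) < k.factorial := by positivity
  rw [div_le_iff₀ hk] at h2
  calc x ^ k ≤ Real.exp x * k.factorial := le_trans h2 (by nlinarith)
    _ = k.factorial * Real.exp x := by ring

lemma aux_abs_le_exp_sq (t : ℝ) : |t| ≤ Real.exp (t ^ 2) := by
  have h1 : |t| ≤ t ^ 2 + 1 := by nlinarith [sq_abs t, sq_nonneg (|t| - 1)]
  have h2 := Real.add_one_le_exp (t ^ 2)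
  linarith

lemma aux_gauss (t : ℝ) : Real.exp (-Real.pi * t ^ 2) * |t| ≤ Real.exp (-t ^ 2) := by
  have hpi : (3:ℝ) ≤ Real.pi := Real.pi_gt_three.le
  calc Real.exp (-Real.pi * t ^ 2) * |t| ≤ Real.exp (-Real.pi * t ^ 2) * Real.exp (t ^ 2) :=
        mul_le_mul_of_nonneg_left (aux_abs_le_exp_sq t) (Real.exp_nonneg _)
    _ = Real.exp ((1 - Real.pi) * t ^ 2) := by rw [← Real.exp_add]; ring_nf
    _ ≤ Real.exp (-t ^ 2) := Real.exp_le_exp.mpr (by nlinarith [sq_nonneg t])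

lemma aux_rpow_ge {x y p : ℝ} (hy : 0 < y) (hp : 0 < p) (hx : y ^ (1/p) ≤ x) : y ≤ x ^ p := by
  have h : y = (y ^ (1/p)) ^ p := by
    rw [← Real.rpow_mul hy.le, one_div_mul_cancel hp.ne', Real.rpow_one]
  rw [h]
  exact Real.rpow_le_rpow (Real.rpow_pos_of_pos hy _).le hx hp.le

lemma aux_X_sq {A B v M : ℝ} (hv : 0 < v) (hB : |B| ≤ M) :
    A ^ 2 / (2 * v) - M ^ 2 * v ≤ (A / Real.sqrt v - B * Real.sqrt v) ^ 2 := by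
  have hw : 0 < Real.sqrt v := Real.sqrt_pos.mpr hv
  have hw2 : (Real.sqrt v) ^ 2 = v := Real.sq_sqrt hv.le
  set w := Real.sqrt v
  have h1 : (A / w) ^ 2 = A ^ 2 / v := by rw [div_pow, hw2]
  have h2 : (B * w) ^ 2 = B ^ 2 * v := by rw [mul_pow, hw2]
  have hB2 : B ^ 2 ≤ M ^ 2 := by
    have := sq_abs B
    nlinarith [abs_nonneg B]
  have key : (A / w) ^ 2 / 2 - (B * w) ^ 2 ≤ (A / w - B * w) ^ 2 := by
    nlinarith [sq_nonneg (A / w - 2 * (B * w))]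
  rw [h1, h2] at key
  have e1 : A ^ 2 / (2 * v) = A ^ 2 / v / 2 := by rw [div_div, mul_comm]
  have e2 : B ^ 2 * v ≤ M ^ 2 * v := mul_le_mul_of_nonneg_right hB2 hv.le
  linarith

lemma aux_pow_exp_neg (u : ℝ) (hu : 0 ≤ u) (k : ℕ) :
    u ^ k * Real.exp (-(u/4)) ≤ 4 ^ k * (k.factorial : ℝ) := by
  have hx := aux_pow_le_exp (u/4) (by positivity) k
  have he : u ^ k = 4 ^ k * (u/4) ^ k := by
    rw [div_pow]
    rw [mul_div_assoc']
    rw [mul_comm ((4:ℝ)^k) (u^k), mul_div_assoc, div_self (by positivity : ((4:ℝ))^k ≠ 0), mul_one]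
  calc u ^ k * Real.exp (-(u/4)) = 4 ^ k * (u/4) ^ k * Real.exp (-(u/4)) := by rw [← he]
    _ ≤ 4 ^ k * ((k.factorial : ℝ) * Real.exp (u/4)) * Real.exp (-(u/4)) := by gcongr
    _ = 4 ^ k * (k.factorial : ℝ) * (Real.exp (u/4) * Real.exp (-(u/4))) := by ring
    _ = 4 ^ k * (k.factorial : ℝ) := by
        rw [← Real.exp_add, add_neg_cancel, Real.exp_zero, mul_one]

lemma aux_K_bound {M A B v : ℝ} (hB : |B| ≤ M) :
    |Kker A B v| ≤ (1 + 2 * M * Real.sqrt v) *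
      Real.exp (-(A / Real.sqrt v - B * Real.sqrt v) ^ 2) := by
  have hM0 : 0 ≤ M := le_trans (abs_nonneg B) hB
  have hw0 : 0 ≤ Real.sqrt v := Real.sqrt_nonneg v
  set w := Real.sqrt v
  set X := A / w - B * w with hX
  have h0 : A / w + B * w = X + 2 * B * w := by rw [hX]; ring
  have habs : |Kker A B v| = Real.exp (-Real.pi * X ^ 2) * |X + 2 * B * w| := by
    rw [Kker, h0, abs_mul, abs_of_pos (Real.exp_pos _)]
  rw [habs]
  have h1 : |X + 2 * B * w| ≤ |X| + 2 * M * w := by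
    calc |X + 2 * B * w| ≤ |X| + |2 * B * w| := abs_add_le _ _
      _ ≤ |X| + 2 * M * w := by
          rw [abs_mul, abs_mul, abs_two, abs_of_nonneg hw0]
          have : |B| * w ≤ M * w := mul_le_mul_of_nonneg_right hB hw0
          nlinarith
  have hpi1 : Real.exp (-Real.pi * X ^ 2) ≤ Real.exp (-X ^ 2) := by
    apply Real.exp_le_exp.mpr
    nlinarith [sq_nonneg X, Real.pi_gt_three]
  calc Real.exp (-Real.pi * X ^ 2) * |X + 2 * B * w|
      ≤ Real.exp (-Real.pi * X ^ 2) * (|X| + 2 * M * w) :=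
        mul_le_mul_of_nonneg_left h1 (Real.exp_nonneg _)
    _ = Real.exp (-Real.pi * X ^ 2) * |X| + 2 * M * w * Real.exp (-Real.pi * X ^ 2) := by ring
    _ ≤ Real.exp (-X ^ 2) + 2 * M * w * Real.exp (-X ^ 2) := by
        have h3 := aux_gauss X
        have h2 : 2 * M * w * Real.exp (-Real.pi * X ^ 2) ≤ 2 * M * w * Real.exp (-X ^ 2) :=
          mul_le_mul_of_nonneg_left hpi1 (by positivity)
        linarith
    _ = (1 + 2 * M * w) * Real.exp (-X ^ 2) := by ring

lemma region2_bound {C s A B M v : ℝ} {n : ℕ} (hC : 0 < C) (hM1 : 1 ≤ M) (hB : |B| ≤ M)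
    (hsn : |s| ≤ n) (hv1 : 1 ≤ v) :
    |Real.exp (-C*v) * v ^ s * Kker A B v / v| ≤
      (3*M*((n.factorial : ℝ) * (2/C)^n)) * Real.exp (-(C/2) * v) := by
  have hv0 : (0:ℝ) < v := lt_of_lt_of_le one_pos hv1
  have hvs : 0 < v ^ s := Real.rpow_pos_of_pos hv0 s
  have hw0 : 0 ≤ Real.sqrt v := Real.sqrt_nonneg v
  have h1 : |Real.exp (-C*v) * v ^ s * Kker A B v / v|
      = Real.exp (-C*v) * v ^ s * |Kker A B v| / v := by
    rw [abs_div, abs_mul, abs_mul, abs_of_pos (Real.exp_pos _), abs_of_pos hvs, abs_of_pos hv0]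
  rw [h1]
  set w := Real.sqrt v
  have hwv : w ≤ v := by
    have hsq : v ≤ v ^ 2 := by nlinarith
    calc w ≤ Real.sqrt (v ^ 2) := Real.sqrt_le_sqrt hsq
      _ = v := Real.sqrt_sq hv0.le
  have hK : |Kker A B v| ≤ (1 + 2*M*w) := by
    calc |Kker A B v| ≤ (1 + 2*M*w) * Real.exp (-(A / w - B * w) ^ 2) := aux_K_bound hB
      _ ≤ (1 + 2*M*w) * 1 := by
          apply mul_le_mul_of_nonneg_left _ (by positivity)
          rw [Real.exp_le_one_iff]
          nlinarith [sq_nonneg (A / w - B * w)]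
      _ = 1 + 2*M*w := mul_one _
  have h2 : 1 + 2*M*w ≤ 3*M*v := by nlinarith
  have h3 : v ^ s ≤ v ^ (n:ℝ) :=
    Real.rpow_le_rpow_of_exponent_le hv1 (le_trans (le_abs_self s) hsn)
  have h4 : v ^ (n:ℝ) = v ^ n := Real.rpow_natCast v n
  have h5 : v ^ n ≤ (n.factorial : ℝ) * (2/C)^n * Real.exp ((C/2) * v) := by
    have hx := aux_pow_le_exp ((C/2)*v) (by positivity) n
    have he : ((2:ℝ)/C)^n * ((C/2)*v)^n = v ^ n := by
      rw [← mul_pow]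
      congr 1
      field_simp
    calc v ^ n = ((2:ℝ)/C)^n * ((C/2)*v)^n := he.symm
      _ ≤ ((2:ℝ)/C)^n * ((n.factorial : ℝ) * Real.exp ((C/2)*v)) := by
          apply mul_le_mul_of_nonneg_left hx (by positivity)
      _ = (n.factorial : ℝ) * (2/C)^n * Real.exp ((C/2) * v) := by ring
  calc Real.exp (-C*v) * v ^ s * |Kker A B v| / v
      ≤ Real.exp (-C*v) * v ^ s * (3*M*v) / v := by
        gcongr
        exact le_trans hK h2
    _ = 3*M*(v ^ s) * Real.exp (-C*v) := by field_simp
    _ ≤ 3*M*(v ^ n : ℝ) * Real.exp (-C*v) := by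
        rw [← h4]; gcongr
    _ ≤ 3*M*((n.factorial : ℝ) * (2/C)^n * Real.exp ((C/2) * v)) * Real.exp (-C*v) := by
        gcongr
    _ = (3*M*((n.factorial : ℝ) * (2/C)^n)) * (Real.exp ((C/2)*v) * Real.exp (-C*v)) := by ring
    _ = (3*M*((n.factorial : ℝ) * (2/C)^n)) * Real.exp (-(C/2) * v) := by
        rw [← Real.exp_add]
        congr 1
        ring

set_option maxHeartbeats 1000000 in
lemma region1_bound {C s ε A B M : ℝ} {n : ℕ} (hC : 0 < C) (hε1 : 0 < ε)
    (hM1 : 1 ≤ M) (hB : |B| ≤ M) (hsn : |s| ≤ n) (hA1 : 1 ≤ A)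
    (hAe2 : 8 * M ^ 2 ≤ A ^ (2*ε)) {v : ℝ} (hv0 : 0 < v) (hvR : v ≤ A ^ (1-ε)) (hvA : v ≤ A) :
    |Real.exp (-C*v) * v ^ s * Kker A B v / v| ≤
      (3 * M * (4 ^ (n+1) * ((n+1).factorial : ℝ))) * A ^ (n+1) * Real.exp (-(A ^ (1+ε)) / 8) := by
  have hApos : (0:ℝ) < A := lt_of_lt_of_le one_pos hA1
  have hvs : 0 < v ^ s := Real.rpow_pos_of_pos hv0 s
  have hw0' : 0 < Real.sqrt v := Real.sqrt_pos.mpr hv0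
  set w := Real.sqrt v with hwdef
  set X := A / w - B * w with hXdef
  -- rewrite abs
  have h1 : |Real.exp (-C*v) * v ^ s * Kker A B v / v|
      = Real.exp (-C*v) * v ^ s * |Kker A B v| / v := by
    rw [abs_div, abs_mul, abs_mul, abs_of_pos (Real.exp_pos _), abs_of_pos hvs, abs_of_pos hv0]
  -- exponent estimates
  have hXsq : A ^ 2 / (2*v) - M ^ 2 * v ≤ X ^ 2 := aux_X_sq hv0 hB
  have hA2 : (A:ℝ) ^ 2 = A ^ (1-ε) * A ^ (1+ε) := by
    rw [← Real.rpow_add hApos, show (1-ε)+(1+ε) = (2:ℝ) by ring,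
      show (2:ℝ) = ((2:ℕ):ℝ) by norm_num, Real.rpow_natCast]
  have hR0 : (0:ℝ) < A ^ (1-ε) := Real.rpow_pos_of_pos hApos _
  have hP0 : (0:ℝ) < A ^ (1+ε) := Real.rpow_pos_of_pos hApos _
  have hA2v : A ^ (1+ε) ≤ A ^ 2 / v := by
    rw [hA2, le_div_iff₀ hv0]
    nlinarith
  have hM2v : M ^ 2 * v ≤ A ^ (1+ε) / 8 := by
    have h3 : A ^ (1+ε) = A ^ (1-ε) * A ^ (2*ε) := by
      rw [← Real.rpow_add hApos]; ring_nf
    have h4 : M ^ 2 * v ≤ M ^ 2 * A ^ (1-ε) := mul_le_mul_of_nonneg_left hvR (sq_nonneg M)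
    have h5 : M ^ 2 * A ^ (1-ε) ≤ (A ^ (2*ε) / 8) * A ^ (1-ε) := by
      apply mul_le_mul_of_nonneg_right _ hR0.le
      linarith
    rw [h3]; nlinarith
  have hone : 1 / v ≤ A ^ 2 / v := by
    gcongr
    nlinarith
  have hexpX : Real.exp (-X ^ 2) ≤ Real.exp (-(1/(4*v))) * Real.exp (-(A ^ (1+ε)) / 8) := by
    rw [← Real.exp_add]
    apply Real.exp_le_exp.mpr
    have e1 : A ^ 2 / (2*v) = (A ^ 2 / v)/2 := by rw [div_div, mul_comm]
    have e2 : 1/(4*v) = (1/v)/4 := by rw [div_div, mul_comm]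
    rw [e2]
    linarith
  -- core polynomial bound
  have hcore : v ^ s * (1 + 2*M*w) * Real.exp (-(1/(4*v))) / v
      ≤ (3 * M * (4 ^ (n+1) * ((n+1).factorial : ℝ))) * A ^ (n+1) := by
    have hfac1 : (1:ℝ) ≤ 4 ^ (n+1) * ((n+1).factorial : ℝ) := by
      have : (1:ℝ) ≤ 4 ^ (n+1) := one_le_pow₀ (by norm_num)
      have h2 : (1:ℝ) ≤ ((n+1).factorial : ℝ) := by
        exact_mod_cast Nat.one_le_iff_ne_zero.mpr (Nat.factorial_ne_zero _)
      nlinarith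
    have hApow1 : (1:ℝ) ≤ A ^ (n+1) := one_le_pow₀ hA1
    rcases le_or_gt v 1 with hv1 | hv1
    · -- small v
      have hw1 : w ≤ 1 := Real.sqrt_le_one.mpr hv1
      have h2Mw : 2*M*w ≤ 2*M*1 := mul_le_mul_of_nonneg_left hw1 (by positivity)
      have h5 : 1 + 2*M*w ≤ 3*M := by linarith
      have h6 : v ^ s / v = v ^ (s-1) := by rw [Real.rpow_sub hv0, Real.rpow_one]
      have h7 : v ^ (s-1) ≤ v ^ (-(((n:ℝ))+1)) := by
        apply Real.rpow_le_rpow_of_exponent_ge hv0 hv1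
        have := abs_le.mp hsn
        linarith [this.1]
      have h8 : v ^ (-(((n:ℝ))+1)) = (1/v) ^ (n+1) := by
        rw [show -(((n:ℝ))+1) = -(((n+1:ℕ)):ℝ) by push_cast; ring,
          Real.rpow_neg hv0.le, Real.rpow_natCast, one_div, inv_pow]
      have h9 : (1/v) ^ (n+1) * Real.exp (-(1/(4*v))) ≤ 4 ^ (n+1) * (((n+1).factorial : ℝ)) := by
        have harg : (1:ℝ)/(4*v) = (1/v)/4 := by rw [div_div, mul_comm]
        rw [harg]
        exact aux_pow_exp_neg (1/v) (by positivity) (n+1)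
      calc v ^ s * (1 + 2*M*w) * Real.exp (-(1/(4*v))) / v
          = (v ^ s / v) * ((1 + 2*M*w) * Real.exp (-(1/(4*v)))) := by ring
        _ ≤ (v ^ s / v) * (3*M * Real.exp (-(1/(4*v)))) := by
            gcongr
        _ = 3*M * (v ^ (s-1) * Real.exp (-(1/(4*v)))) := by rw [h6]; ring
        _ ≤ 3*M * (v ^ (-(((n:ℝ))+1)) * Real.exp (-(1/(4*v)))) := by gcongr
        _ = 3*M * ((1/v) ^ (n+1) * Real.exp (-(1/(4*v)))) := by rw [h8]
        _ ≤ 3*M * (4 ^ (n+1) * ((n+1).factorial : ℝ)) := by gcongr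
        _ ≤ (3 * M * (4 ^ (n+1) * ((n+1).factorial : ℝ))) * A ^ (n+1) :=
            le_mul_of_one_le_right (by positivity) hApow1
    · -- large v
      have hv1' : (1:ℝ) ≤ v := hv1.le
      have h10 : v ^ s ≤ v ^ ((n:ℝ)) :=
        Real.rpow_le_rpow_of_exponent_le hv1' (le_trans (le_abs_self s) hsn)
      have h11 : v ^ ((n:ℝ)) = v ^ n := Real.rpow_natCast v n
      have h12 : v ^ n ≤ A ^ n := pow_le_pow_left₀ hv0.le hvA n
      have h13 : w ≤ A := by
        have hsq : v ≤ v ^ 2 := by nlinarith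
        calc w ≤ Real.sqrt (v ^ 2) := Real.sqrt_le_sqrt hsq
          _ = v := Real.sqrt_sq hv0.le
          _ ≤ A := hvA
      have h14 : 1 + 2*M*w ≤ 3*M*A := by nlinarith
      calc v ^ s * (1 + 2*M*w) * Real.exp (-(1/(4*v))) / v
          ≤ v ^ s * (1 + 2*M*w) * 1 / v := by
            gcongr
            rw [Real.exp_le_one_iff]
            have : (0:ℝ) < 1/(4*v) := by positivity
            linarith
        _ = v ^ s * (1 + 2*M*w) / v := by ring
        _ ≤ v ^ s * (1 + 2*M*w) := div_le_self (by positivity) hv1'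
        _ ≤ v ^ ((n:ℝ)) * (3*M*A) := by
            apply mul_le_mul h10 h14 (by positivity) (by positivity)
        _ = 3*M* (v ^ n) * A := by rw [h11]; ring
        _ ≤ 3*M* (A ^ n) * A := by gcongr
        _ = (3*M) * A ^ (n+1) := by ring
        _ ≤ (3 * M * (4 ^ (n+1) * ((n+1).factorial : ℝ))) * A ^ (n+1) := by
            apply mul_le_mul_of_nonneg_right _ (by positivity)
            nlinarith
  -- assemble
  rw [h1]
  calc Real.exp (-C*v) * v ^ s * |Kker A B v| / v
      ≤ 1 * v ^ s * ((1 + 2*M*w) * Real.exp (-X ^ 2)) / v := by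
        gcongr
        · rw [Real.exp_le_one_iff]; nlinarith
        · exact aux_K_bound hB
    _ ≤ 1 * v ^ s * ((1 + 2*M*w) * (Real.exp (-(1/(4*v))) * Real.exp (-(A ^ (1+ε)) / 8))) / v := by
        gcongr
    _ = (v ^ s * (1 + 2*M*w) * Real.exp (-(1/(4*v))) / v) * Real.exp (-(A ^ (1+ε)) / 8) := by
        ring
    _ ≤ (3 * M * (4 ^ (n+1) * ((n+1).factorial : ℝ))) * A ^ (n+1) * Real.exp (-(A ^ (1+ε)) / 8) := by
        gcongr

/-- For constants `C > 0`, `s ∈ ℝ`, `ε ∈ (0,1)` and `B` ranging in a compact set `T`,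
uniformly for `A` sufficiently large:
(i) `∫₀^{A^{1-ε}} e^{-C𝐯}𝐯^s K(𝐯) d𝐯/𝐯 ≪ e^{-A^{ε/2}}`, and
(ii) `∫_{A^{1-ε}}^∞ e^{-C𝐯}𝐯^s K(𝐯) d𝐯/𝐯 ≪ e^{-A^{(1-ε)/2}}`. -/
theorem stmt_16 (C s ε : ℝ) (hC : 0 < C) (hε : ε ∈ Set.Ioo (0 : ℝ) 1)
    (T : Set ℝ) (hT : IsCompact T) :
    ∃ c A₀ : ℝ, 0 < c ∧ 0 < A₀ ∧ ∀ A : ℝ, A₀ ≤ A → ∀ B ∈ T,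
      |∫ v in Set.Ioo (0 : ℝ) (A ^ (1 - ε)), Real.exp (-C * v) * v ^ s * Kker A B v / v|
          ≤ c * Real.exp (-(A ^ (ε / 2)))
      ∧ |∫ v in Set.Ioi (A ^ (1 - ε)), Real.exp (-C * v) * v ^ s * Kker A B v / v|
          ≤ c * Real.exp (-(A ^ ((1 - ε) / 2))) := by
  obtain ⟨hε1, hε2⟩ := hε
  obtain ⟨r, hrT⟩ := hT.isBounded.subset_closedBall 0
  set M : ℝ := max r 1 with hMdef
  have hM1 : (1:ℝ) ≤ M := le_max_right r 1
  have hM0 : (0:ℝ) < M := lt_of_lt_of_le one_pos hM1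
  have hBM : ∀ B ∈ T, |B| ≤ M := by
    intro B hB
    have h := hrT hB
    rw [Metric.mem_closedBall, Real.dist_eq, sub_zero] at h
    exact le_trans h (le_max_left r 1)
  set n : ℕ := ⌈|s|⌉₊ with hndef
  have hsn : |s| ≤ n := Nat.le_ceil _
  set Q₁ : ℝ := 3 * M * (4 ^ (n+1) * ((n+1).factorial : ℝ)) with hQ₁def
  set Q₂ : ℝ := 3 * M * ((n.factorial : ℝ) * (2/C) ^ n) with hQ₂def
  have hQ₁ : 0 < Q₁ := by positivity
  have hQ₂ : 0 < Q₂ := by positivity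
  refine ⟨Q₁ + Q₂ * (2/C), max (max 1 ((8*((n:ℝ)+3)) ^ (1/ε)))
      (max ((8*M^2) ^ (1/(2*ε))) ((2/C) ^ (2/(1-ε)))), by positivity,
      lt_of_lt_of_le one_pos (le_trans (le_max_left _ _) (le_max_left _ _)), ?_⟩
  intro A hA B hBT
  have hBle : |B| ≤ M := hBM B hBT
  have hA1 : (1:ℝ) ≤ A := le_trans (le_trans (le_max_left _ _) (le_max_left _ _)) hA
  have hApos : (0:ℝ) < A := lt_of_lt_of_le one_pos hA1
  have hAe1 : 8*((n:ℝ)+3) ≤ A ^ ε :=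
    aux_rpow_ge (by positivity) hε1 (le_trans (le_trans (le_max_right _ _) (le_max_left _ _)) hA)
  have hAe2 : 8*M^2 ≤ A ^ (2*ε) :=
    aux_rpow_ge (by positivity) (by linarith)
      (le_trans (le_trans (le_max_left _ _) (le_max_right _ _)) hA)
  have hAe3 : 2/C ≤ A ^ ((1-ε)/2) := by
    apply aux_rpow_ge (by positivity) (by linarith)
    rw [one_div_div]
    exact le_trans (le_trans (le_max_right _ _) (le_max_right _ _)) hA
  set R : ℝ := A ^ (1-ε) with hRdef
  have hRpos : 0 < R := Real.rpow_pos_of_pos hApos _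
  have hR1 : (1:ℝ) ≤ R := by
    calc (1:ℝ) = A ^ (0:ℝ) := (Real.rpow_zero A).symm
      _ ≤ R := Real.rpow_le_rpow_of_exponent_le hA1 (by linarith)
  have hRA : R ≤ A := by
    calc R ≤ A ^ (1:ℝ) := Real.rpow_le_rpow_of_exponent_le hA1 (by linarith)
      _ = A := Real.rpow_one A
  constructor
  · -- region (i)
    have hmeas : MeasurableSet (Set.Ioo (0:ℝ) R) := measurableSet_Ioo
    have hvol : volume (Set.Ioo (0:ℝ) R) < ⊤ := by
      rw [Real.volume_Ioo]; exact ENNReal.ofReal_lt_top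
    have hb := norm_setIntegral_le_of_norm_le_const (μ := volume) hvol
      (f := fun v => Real.exp (-C * v) * v ^ s * Kker A B v / v)
      (C := Q₁ * A ^ (n+1) * Real.exp (-(A ^ (1+ε)) / 8))
      (fun v hv => by
        rw [Real.norm_eq_abs]
        exact region1_bound hC hε1 hM1 hBle hsn hA1 hAe2 hv.1 hv.2.le (le_trans hv.2.le hRA))
    rw [Real.norm_eq_abs, Measure.real] at hb
    have hvol2 : (volume (Set.Ioo (0:ℝ) R)).toReal = R := by
      rw [Real.volume_Ioo, sub_zero, ENNReal.toReal_ofReal hRpos.le]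
    rw [hvol2] at hb
    refine le_trans hb ?_
    -- Q₁ A^{n+1} exp(-A^{1+ε}/8) R ≤ (Q₁+Q₂(2/C)) exp(-A^{ε/2})
    have hkey : (A:ℝ) ^ (n+2) * Real.exp (-(A ^ (1+ε)) / 8) ≤ Real.exp (-(A ^ (ε/2))) := by
      have hAexp : A ≤ Real.exp A := by linarith [Real.add_one_le_exp A]
      have h1 : (A:ℝ) ^ (n+2) ≤ Real.exp (((n:ℝ)+2) * A) := by
        calc (A:ℝ) ^ (n+2) ≤ (Real.exp A) ^ (n+2) := pow_le_pow_left₀ (by linarith) hAexp _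
          _ = Real.exp (((n+2:ℕ):ℝ) * A) := by rw [← Real.exp_nat_mul]
          _ = Real.exp (((n:ℝ)+2) * A) := by push_cast; ring
      have h2 : A ^ (ε/2) ≤ A := by
        calc A ^ (ε/2) ≤ A ^ (1:ℝ) := Real.rpow_le_rpow_of_exponent_le hA1 (by linarith)
          _ = A := Real.rpow_one A
      have h3 : A ^ ((1:ℝ)+ε) = A * A ^ ε := by
        rw [Real.rpow_add hApos, Real.rpow_one]
      have h4 : ((n:ℝ)+3) * A ≤ A ^ ((1:ℝ)+ε) / 8 := by
        rw [h3]
        nlinarith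
      calc (A:ℝ) ^ (n+2) * Real.exp (-(A ^ (1+ε)) / 8)
          ≤ Real.exp (((n:ℝ)+2) * A) * Real.exp (-(A ^ (1+ε)) / 8) := by
            gcongr
        _ = Real.exp (((n:ℝ)+2) * A - A ^ ((1:ℝ)+ε) / 8) := by
            rw [← Real.exp_add]; ring_nf
        _ ≤ Real.exp (-(A ^ (ε/2))) := by
            apply Real.exp_le_exp.mpr
            have h5 : A ^ (ε/2) ≤ A := h2
            nlinarith
    calc Q₁ * A ^ (n+1) * Real.exp (-(A ^ (1+ε)) / 8) * R
        ≤ Q₁ * A ^ (n+1) * Real.exp (-(A ^ (1+ε)) / 8) * A := by gcongr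
      _ = Q₁ * (A ^ (n+2) * Real.exp (-(A ^ (1+ε)) / 8)) := by ring
      _ ≤ Q₁ * Real.exp (-(A ^ (ε/2))) := by gcongr
      _ ≤ (Q₁ + Q₂ * (2/C)) * Real.exp (-(A ^ (ε/2))) := by
          apply mul_le_mul_of_nonneg_right _ (Real.exp_nonneg _)
          have : (0:ℝ) ≤ Q₂ * (2/C) := by positivity
          linarith
  · -- region (ii)
    have hgint : IntegrableOn (fun v => Q₂ * Real.exp (-(C/2) * v)) (Set.Ioi R) :=
      (exp_neg_integrableOn_Ioi R (half_pos hC)).const_mul Q₂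
    have h1 : |∫ v in Set.Ioi R, Real.exp (-C * v) * v ^ s * Kker A B v / v|
        ≤ ∫ v in Set.Ioi R, |Real.exp (-C * v) * v ^ s * Kker A B v / v| := by
      simpa only [Real.norm_eq_abs] using
        norm_integral_le_integral_norm (μ := volume.restrict (Set.Ioi R))
          (fun v => Real.exp (-C * v) * v ^ s * Kker A B v / v)
    have h2 : ∫ v in Set.Ioi R, |Real.exp (-C * v) * v ^ s * Kker A B v / v|
        ≤ ∫ v in Set.Ioi R, Q₂ * Real.exp (-(C/2) * v) := by
      apply integral_mono_of_nonneg (Filter.Eventually.of_forall fun v => abs_nonneg _) hgint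
      rw [Filter.EventuallyLE, ae_restrict_iff' measurableSet_Ioi]
      apply Filter.Eventually.of_forall
      intro v hv
      exact region2_bound hC hM1 hBle hsn (le_trans hR1 (le_of_lt hv))
    have h3 : ∫ v in Set.Ioi R, Q₂ * Real.exp (-(C/2) * v)
        = Q₂ * ((C/2)⁻¹ * Real.exp (-(C/2 * R))) := by
      rw [integral_const_mul]
      congr 1
      have h4 := integral_comp_mul_left_Ioi (fun x => Real.exp (-x)) R (half_pos hC)
      simp only [neg_mul] at h4 ⊢
      rw [h4, integral_exp_neg_Ioi, smul_eq_mul]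
    have h5 : A ^ ((1-ε)/2) ≤ C/2 * R := by
      have hsplit : R = A ^ ((1-ε)/2) * A ^ ((1-ε)/2) := by
        rw [hRdef, ← Real.rpow_add hApos]; ring_nf
      have hph : 0 < A ^ ((1-ε)/2) := Real.rpow_pos_of_pos hApos _
      have k1 : (2/C) * A ^ ((1-ε)/2) ≤ A ^ ((1-ε)/2) * A ^ ((1-ε)/2) :=
        mul_le_mul_of_nonneg_right hAe3 hph.le
      have k2 := mul_le_mul_of_nonneg_left k1 (half_pos hC).le
      have e : C/2 * ((2/C) * A ^ ((1-ε)/2)) = A ^ ((1-ε)/2) := by field_simp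
      rw [hsplit]
      linarith
    calc |∫ v in Set.Ioi R, Real.exp (-C * v) * v ^ s * Kker A B v / v|
        ≤ ∫ v in Set.Ioi R, Q₂ * Real.exp (-(C/2) * v) := le_trans h1 h2
      _ = Q₂ * ((C/2)⁻¹ * Real.exp (-(C/2 * R))) := h3
      _ = Q₂ * (2/C) * Real.exp (-(C/2 * R)) := by rw [inv_div]; ring
      _ ≤ Q₂ * (2/C) * Real.exp (-(A ^ ((1-ε)/2))) := by
          apply mul_le_mul_of_nonneg_left (Real.exp_le_exp.mpr (by linarith)) (by positivity)
      _ ≤ (Q₁ + Q₂ * (2/C)) * Real.exp (-(A ^ ((1-ε)/2))) := by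
          apply mul_le_mul_of_nonneg_right _ (Real.exp_nonneg _)
          linarith
end
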